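/- arXiv:1805.04916 — 7 statements merged into one kernel-verified Lean document; each statement's English description precedes it below -/
import Mathlib

section
/- Let γ be a normalized profile function of length ℓ satisfying the equatorial symmetry γ(t) = γ(ℓ − t) for all t ∈ [0,ℓ], and suppose the Gaussian curvature K(t) = −γ''(t)/γ(t) is monotone non-decreasing on (0, ℓ/2]. Then |Γ(t) + γ'(t)| ≤ γ(t) for every t ∈ (0,ℓ); equivalently, m_γ := sup_{t∈(0,ℓ)} |Γ(t)+γ'(t)|/γ(t) ≤ 1. -/
/-- A profile function of length `ℓ`: a `C^∞` function `γ` with `γ(0) = γ(ℓ) = 0`,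
`γ > 0` on `(0,ℓ)`, `γ'(0) = 1`, `γ'(ℓ) = -1`, `|γ'| < 1` on `(0,ℓ)`, and all
even-order derivatives of `γ` vanishing at `t = 0` and `t = ℓ`. -/
structure IsProfileFunction (ℓ : ℝ) (γ : ℝ → ℝ) : Prop where
  ell_pos : 0 < ℓ
  smooth : ContDiff ℝ (⊤ : ℕ∞) γ
  zero_left : γ 0 = 0
  zero_right : γ ℓ = 0
  pos : ∀ t ∈ Set.Ioo 0 ℓ, 0 < γ t
  deriv_left : deriv γ 0 = 1
  deriv_right : deriv γ ℓ = -1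
  abs_deriv_lt_one : ∀ t ∈ Set.Ioo 0 ℓ, |deriv γ t| < 1
  even_deriv_left : ∀ n : ℕ, iteratedDeriv (2 * n) γ 0 = 0
  even_deriv_right : ∀ n : ℕ, iteratedDeriv (2 * n) γ ℓ = 0

/-- The profile function is normalized: `∫₀^ℓ γ(t) dt = 2`, so the associated surface
of revolution has area `4π`. -/
def IsNormalizedProfile (ℓ : ℝ) (γ : ℝ → ℝ) : Prop :=
  (∫ t in (0:ℝ)..ℓ, γ t) = 2

/-- `Γ(t) = -1 + ∫₀^t γ(s) ds`. -/
noncomputable def Gam (γ : ℝ → ℝ) (t : ℝ) : ℝ :=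
  -1 + ∫ s in (0:ℝ)..t, γ s

/-- If a normalized profile function is symmetric with respect to the
equator and its Gaussian curvature `K = -γ''/γ` is non-decreasing on `(0, ℓ/2]`,
then `|Γ t + γ' t| ≤ γ t` on `(0,ℓ)`, i.e. `m_γ ≤ 1`. -/
theorem stmt_1 (ℓ : ℝ) (γ : ℝ → ℝ)
    (hγ : IsProfileFunction ℓ γ) (hnorm : IsNormalizedProfile ℓ γ)
    (hsym : ∀ t ∈ Set.Icc 0 ℓ, γ t = γ (ℓ - t))
    (hK : ∀ s ∈ Set.Ioc 0 (ℓ / 2), ∀ t ∈ Set.Ioc 0 (ℓ / 2), s ≤ t →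
      -(deriv (deriv γ) s) / γ s ≤ -(deriv (deriv γ) t) / γ t) :
    ∀ t ∈ Set.Ioo 0 ℓ, |Gam γ t + deriv γ t| ≤ γ t := by
  obtain ⟨hℓ, hsm, hz0, hzl, hpos, hd0, hdl, habs, _, _⟩ := hγ
  have hcont : Continuous γ := hsm.continuous
  have hdd : Differentiable ℝ γ ∧ ContDiff ℝ (⊤ : ℕ∞) (deriv γ) := by
    exact ⟨(contDiff_infty_iff_deriv.mp hsm).1, (contDiff_infty_iff_deriv.mp hsm).2⟩
  have hdiff : Differentiable ℝ γ := hdd.1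
  have hdiff' : Differentiable ℝ (deriv γ) := (contDiff_infty_iff_deriv.mp hdd.2).1
  have hInt : ∀ a b : ℝ, IntervalIntegrable γ MeasureTheory.volume a b :=
    fun a b => hcont.intervalIntegrable a b
  -- FTC
  have hGam : ∀ t : ℝ, HasDerivAt (Gam γ) (γ t) t := by
    intro t
    have h1 : HasDerivAt (fun u => ∫ x in (0:ℝ)..u, γ x) (γ t) t :=
      intervalIntegral.integral_hasDerivAt_right (hInt 0 t)
        (hcont.stronglyMeasurable.stronglyMeasurableAtFilter) hcont.continuousAt
    exact h1.const_add (-1 : ℝ)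
  -- integral symmetry
  have hint_symm : ∀ t ∈ Set.Icc (0:ℝ) ℓ,
      (∫ s in (0:ℝ)..t, γ s) = ∫ s in (ℓ-t)..ℓ, γ s := by
    intro t ht
    have h1 : (∫ s in (0:ℝ)..t, γ s) = ∫ s in (0:ℝ)..t, γ (ℓ - s) := by
      apply intervalIntegral.integral_congr
      intro s hs
      rw [Set.uIcc_of_le ht.1] at hs
      exact hsym s ⟨hs.1, hs.2.trans ht.2⟩
    rw [h1, intervalIntegral.integral_comp_sub_left γ ℓ]
    norm_num
  have hGam_symm : ∀ t ∈ Set.Icc (0:ℝ) ℓ, Gam γ t = - Gam γ (ℓ - t) := by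
    intro t ht
    have h2 : (∫ s in (0:ℝ)..(ℓ-t), γ s) + ∫ s in (ℓ-t)..ℓ, γ s = 2 := by
      rw [intervalIntegral.integral_add_adjacent_intervals (hInt _ _) (hInt _ _)]
      exact hnorm
    have h3 := hint_symm t ht
    simp only [Gam]
    linarith
  have hGam_ell : Gam γ ℓ = 1 := by
    simp only [Gam]
    rw [hnorm]; norm_num
  have hGam_mid : Gam γ (ℓ/2) = 0 := by
    have := hGam_symm (ℓ/2) ⟨by linarith, by linarith⟩
    have h2 : ℓ - ℓ/2 = ℓ/2 := by ring
    rw [h2] at this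
    linarith
  -- derivative symmetry
  have hderiv_symm : ∀ t ∈ Set.Ioo (0:ℝ) ℓ, deriv γ t = - deriv γ (ℓ - t) := by
    intro t ht
    have hev : γ =ᶠ[nhds t] (fun s => γ (ℓ - s)) := by
      filter_upwards [Ioo_mem_nhds ht.1 ht.2] with s hs
      exact hsym s ⟨hs.1.le, hs.2.le⟩
    rw [hev.deriv_eq, deriv_comp_const_sub]
  have hderiv2_symm : ∀ t ∈ Set.Ioo (0:ℝ) ℓ, deriv (deriv γ) t = deriv (deriv γ) (ℓ - t) := by
    intro t ht
    have hev : deriv γ =ᶠ[nhds t] (fun s => -(deriv γ (ℓ - s))) := by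
      filter_upwards [Ioo_mem_nhds ht.1 ht.2] with s hs
      exact hderiv_symm s hs
    rw [hev.deriv_eq, deriv.fun_neg, deriv_comp_const_sub, neg_neg]
  have hderiv_mid : deriv γ (ℓ/2) = 0 := by
    have := hderiv_symm (ℓ/2) ⟨by linarith, by linarith⟩
    have h2 : ℓ - ℓ/2 = ℓ/2 := by ring
    rw [h2] at this
    linarith
  -- curvature monotone (nonincreasing) on right half
  have hKright : ∀ s t : ℝ, ℓ/2 ≤ s → s ≤ t → t < ℓ →
      -(deriv (deriv γ) t) / γ t ≤ -(deriv (deriv γ) s) / γ s := by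
    intro s t hs hst htl
    have hs' : s ∈ Set.Ioo (0:ℝ) ℓ := ⟨by linarith, lt_of_le_of_lt hst htl⟩
    have ht' : t ∈ Set.Ioo (0:ℝ) ℓ := ⟨by linarith, htl⟩
    have h1 := hK (ℓ - t) ⟨by linarith, by linarith⟩ (ℓ - s) ⟨by linarith, by linarith⟩
      (by linarith)
    rw [hderiv2_symm s hs', hderiv2_symm t ht',
      hsym s ⟨hs'.1.le, hs'.2.le⟩, hsym t ⟨ht'.1.le, ht'.2.le⟩]
    exact h1
  -- the function F = Γ + γ'
  set F : ℝ → ℝ := fun t => Gam γ t + deriv γ t with hFdef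
  have hFhas : ∀ t : ℝ, HasDerivAt F (γ t + deriv (deriv γ) t) t :=
    fun t => (hGam t).add (hdiff' t).hasDerivAt
  have hFdiff : Differentiable ℝ F := fun t => (hFhas t).differentiableAt
  have hFderiv : ∀ t : ℝ, deriv F t = γ t + deriv (deriv γ) t := fun t => (hFhas t).deriv
  have hFmid : F (ℓ/2) = 0 := by simp [hFdef, hGam_mid, hderiv_mid]
  have hFell : F ℓ = 0 := by simp [hFdef, hGam_ell, hdl]
  -- Claim 1 : F ≤ 0 on [ℓ/2, ℓ)
  have hF_le : ∀ t : ℝ, ℓ/2 ≤ t → t < ℓ → F t ≤ 0 := by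
    intro t₀ ht₀ ht₀l
    by_cases hcase : (1:ℝ) ≤ -(deriv (deriv γ) t₀) / γ t₀
    · have hanti : AntitoneOn F (Set.Icc (ℓ/2) t₀) := by
        apply antitoneOn_of_deriv_nonpos (convex_Icc _ _) hFdiff.continuous.continuousOn
          (hFdiff.differentiableOn)
        intro x hx
        rw [interior_Icc] at hx
        rw [hFderiv x]
        have hKx := hKright x t₀ hx.1.le hx.2.le ht₀l
        have hγx : 0 < γ x := hpos x ⟨by linarith [hx.1], by linarith [hx.2]⟩
        have h1 : (1:ℝ) ≤ -(deriv (deriv γ) x) / γ x := le_trans hcase hKx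
        rw [le_div_iff₀ hγx] at h1
        linarith
      have := hanti (Set.left_mem_Icc.mpr ht₀) ⟨ht₀, le_refl _⟩ ht₀
      rw [hFmid] at this
      exact this
    · push_neg at hcase
      have hmono : MonotoneOn F (Set.Icc t₀ ℓ) := by
        apply monotoneOn_of_deriv_nonneg (convex_Icc _ _) hFdiff.continuous.continuousOn
          (hFdiff.differentiableOn)
        intro x hx
        rw [interior_Icc] at hx
        rw [hFderiv x]
        have hKx := hKright t₀ x ht₀ hx.1.le hx.2
        have hγx : 0 < γ x := hpos x ⟨by linarith [hx.1], hx.2⟩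
        have h1 : -(deriv (deriv γ) x) / γ x < 1 := lt_of_le_of_lt hKx hcase
        rw [div_lt_iff₀ hγx] at h1
        linarith
      have := hmono (Set.left_mem_Icc.mpr ht₀l.le) (Set.right_mem_Icc.mpr ht₀l.le) ht₀l.le
      rw [hFell] at this
      exact this
  -- nonnegativity of γ on [0, ℓ]
  have hnn : ∀ u ∈ Set.Icc (0:ℝ) ℓ, 0 ≤ γ u := by
    intro u hu
    rcases eq_or_lt_of_le hu.1 with h | h
    · rw [← h, hz0]
    · rcases eq_or_lt_of_le hu.2 with h2 | h2
      · rw [h2, hzl]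
      · exact (hpos u ⟨h, h2⟩).le
  -- Claim 2 : γ² + Γ² ≥ 1 on [ℓ/2, ℓ]
  have hP : ∀ t : ℝ, ℓ/2 ≤ t → t ≤ ℓ → 1 ≤ (γ t)^2 + (Gam γ t)^2 := by
    intro t ht htl
    set P : ℝ → ℝ := fun u => (γ u)^2 + (Gam γ u)^2 with hPdef
    have hPhas : ∀ u : ℝ, HasDerivAt P
        ((2:ℕ) * (γ u)^1 * deriv γ u + (2:ℕ) * (Gam γ u)^1 * γ u) u :=
      fun u => ((hdiff u).hasDerivAt.pow 2).add ((hGam u).pow 2)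
    have hPdiff : Differentiable ℝ P := fun u => (hPhas u).differentiableAt
    have hanti : AntitoneOn P (Set.Icc (ℓ/2) ℓ) := by
      apply antitoneOn_of_deriv_nonpos (convex_Icc _ _) hPdiff.continuous.continuousOn
        (hPdiff.differentiableOn)
      intro x hx
      rw [interior_Icc] at hx
      rw [(hPhas x).deriv]
      have hFx : F x ≤ 0 := hF_le x hx.1.le hx.2
      have hγx : 0 < γ x := hpos x ⟨by linarith [hx.1], hx.2⟩
      have : Gam γ x + deriv γ x ≤ 0 := hFx
      push_cast
      nlinarith
    have h1 := hanti ⟨ht, htl⟩ (Set.right_mem_Icc.mpr (by linarith)) htl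
    have hPell : P ℓ = 1 := by simp [hPdef, hzl, hGam_ell]
    rw [hPell] at h1
    exact h1
  -- main bound on the right half
  have main : ∀ t : ℝ, ℓ/2 ≤ t → t < ℓ → |Gam γ t + deriv γ t| ≤ γ t := by
    intro t ht htl
    have htI : t ∈ Set.Ioo (0:ℝ) ℓ := ⟨by linarith, htl⟩
    have hγt : 0 < γ t := hpos t htI
    have hFt : Gam γ t + deriv γ t ≤ 0 := hF_le t ht htl
    have hdabs := habs t htI
    have hdlo : -1 < deriv γ t := neg_lt_of_abs_lt hdabs
    -- Γ t ≥ 0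
    have hGnn : 0 ≤ Gam γ t := by
      have hsplit : (∫ s in (0:ℝ)..(ℓ/2), γ s) + ∫ s in (ℓ/2)..t, γ s
          = ∫ s in (0:ℝ)..t, γ s :=
        intervalIntegral.integral_add_adjacent_intervals (hInt _ _) (hInt _ _)
      have hnn2 : 0 ≤ ∫ s in (ℓ/2)..t, γ s := by
        apply intervalIntegral.integral_nonneg ht
        intro u hu
        exact hnn u ⟨by linarith [hu.1], by linarith [hu.2]⟩
      have hmid' : (∫ s in (0:ℝ)..(ℓ/2), γ s) = 1 := by
        have := hGam_mid
        simp only [Gam] at this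
        linarith
      simp only [Gam]
      rw [← hsplit, hmid']
      linarith
    have hsq := hP t ht htl.le
    rw [abs_of_nonpos hFt]
    nlinarith [sq_nonneg (γ t + Gam γ t - 1), sq_nonneg (γ t - 1 + Gam γ t),
      sq_nonneg (Gam γ t), mul_pos hγt hγt]
  -- conclude, reflecting the left half
  intro t htI
  rcases le_or_gt (ℓ/2) t with hcase | hcase
  · exact main t hcase htI.2
  · have htI' : ℓ - t ∈ Set.Ioo (0:ℝ) ℓ := ⟨by linarith [htI.2], by linarith [htI.1]⟩
    have h1 : Gam γ t + deriv γ t = -(Gam γ (ℓ - t) + deriv γ (ℓ - t)) := by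
      rw [hGam_symm t ⟨htI.1.le, htI.2.le⟩, hderiv_symm t htI]
      ring
    rw [h1, abs_neg, hsym t ⟨htI.1.le, htI.2.le⟩]
    exact main (ℓ - t) (by linarith) (by linarith [htI.1])
end

section
/- Let γ be a normalized profile function of length ℓ satisfying the equatorial symmetry γ(t) = γ(ℓ − t) for all t ∈ [0,ℓ], and suppose the Gaussian curvature K(t) = −γ''(t)/γ(t) is monotone non-decreasing on (0, ℓ/2]. Then Γ(t) + γ'(t) ≥ 0 for every t ∈ [0, ℓ/2]. -/
/-- If a normalized profile function is symmetric with respect to the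
equator and its Gaussian curvature `K = -γ''/γ` is non-decreasing on `(0, ℓ/2]`,
then `Γ t + γ' t ≥ 0` for every `t ∈ [0, ℓ/2]`. -/
theorem stmt_2 (ℓ : ℝ) (γ : ℝ → ℝ)
    (hγ : IsProfileFunction ℓ γ) (hnorm : IsNormalizedProfile ℓ γ)
    (hsym : ∀ t ∈ Set.Icc 0 ℓ, γ t = γ (ℓ - t))
    (hK : ∀ s ∈ Set.Ioc 0 (ℓ / 2), ∀ t ∈ Set.Ioc 0 (ℓ / 2), s ≤ t →
      -(deriv (deriv γ) s) / γ s ≤ -(deriv (deriv γ) t) / γ t) :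
    ∀ t ∈ Set.Icc 0 (ℓ / 2), 0 ≤ Gam γ t + deriv γ t := by

  obtain ⟨hℓ, hsm, h0, hℓ0, hpos, hd0, hdℓ, habs, _, _⟩ := hγ
  have hdiff : Differentiable ℝ γ := hsm.differentiable (by simp)
  have hsm' : ContDiff ℝ (⊤ : ℕ∞) (deriv γ) := (contDiff_infty_iff_deriv.mp hsm).2
  have hdiff' : Differentiable ℝ (deriv γ) := hsm'.differentiable (by simp)
  have hcont : Continuous γ := hdiff.continuous
  set F : ℝ → ℝ := fun t => Gam γ t + deriv γ t with hFdef
  have hFd : ∀ t, HasDerivAt F (γ t + deriv (deriv γ) t) t := by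
    intro t
    have h1 : HasDerivAt (fun u => ∫ s in (0:ℝ)..u, γ s) (γ t) t :=
      intervalIntegral.integral_hasDerivAt_right (hcont.intervalIntegrable 0 t)
        (hcont.stronglyMeasurableAtFilter _ _) hcont.continuousAt
    have h2 : HasDerivAt (fun u => Gam γ u) (γ t) t := by
      simpa [Gam] using h1.const_add (-1 : ℝ)
    exact h2.add (hdiff' t).hasDerivAt
  have hFdiff : Differentiable ℝ F := fun x => (hFd x).differentiableAt
  have hFcont : Continuous F := hFdiff.continuous
  have hF0 : F 0 = 0 := by simp [hFdef, Gam, hd0]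
  have hhalf_mem : ℓ/2 ∈ Set.Ioo (0:ℝ) ℓ := ⟨by linarith, by linarith⟩
  have heq : γ =ᶠ[nhds (ℓ/2)] fun t => γ (ℓ - t) := by
    filter_upwards [Ioo_mem_nhds hhalf_mem.1 hhalf_mem.2] with x hx
    exact hsym x ⟨hx.1.le, hx.2.le⟩
  have hdhalf : deriv γ (ℓ/2) = 0 := by
    have hg : HasDerivAt (fun t : ℝ => γ (ℓ - t)) (-(deriv γ (ℓ - ℓ/2))) (ℓ/2) := by
      have := ((hdiff (ℓ - ℓ/2)).hasDerivAt).comp (ℓ/2)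
        ((hasDerivAt_id (ℓ/2)).const_sub ℓ)
      simpa [Function.comp_def] using this
    have h1 : deriv γ (ℓ/2) = -(deriv γ (ℓ - ℓ/2)) := by
      rw [heq.deriv_eq]; exact hg.deriv
    have h2 : ℓ - ℓ/2 = ℓ/2 := by ring
    rw [h2] at h1; linarith
  have hint : ∀ a b : ℝ, IntervalIntegrable γ MeasureTheory.volume a b :=
    fun a b => hcont.intervalIntegrable a b
  have hsplit : (∫ s in (0:ℝ)..(ℓ/2), γ s) + ∫ s in (ℓ/2:ℝ)..ℓ, γ s = 2 := by
    rw [intervalIntegral.integral_add_adjacent_intervals (hint 0 (ℓ/2)) (hint (ℓ/2) ℓ)]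
    exact hnorm
  have hrefl : (∫ s in (ℓ/2:ℝ)..ℓ, γ s) = ∫ s in (0:ℝ)..(ℓ/2), γ s := by
    have h1 : (∫ s in (ℓ/2:ℝ)..ℓ, γ s) = ∫ s in (ℓ/2:ℝ)..ℓ, γ (ℓ - s) := by
      apply intervalIntegral.integral_congr
      intro x hx
      rw [Set.uIcc_of_le (by linarith : ℓ/2 ≤ ℓ)] at hx
      exact hsym x ⟨by linarith [hx.1], hx.2⟩
    rw [h1, intervalIntegral.integral_comp_sub_left γ ℓ, sub_self,
      show ℓ - ℓ/2 = ℓ/2 by ring]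
  have hGhalf : Gam γ (ℓ/2) = 0 := by
    have h1 : (∫ s in (0:ℝ)..(ℓ/2), γ s) = 1 := by linarith
    simp [Gam, h1]
  have hFhalf : F (ℓ/2) = 0 := by simp [hFdef, hGhalf, hdhalf]
  intro t ht
  obtain ⟨ht0, ht2⟩ := ht
  by_cases hcase : ∀ s ∈ Set.Ioo (0:ℝ) t, -(deriv (deriv γ) s) / γ s ≤ 1
  · have hmono : MonotoneOn F (Set.Icc 0 t) := by
      apply monotoneOn_of_deriv_nonneg (convex_Icc 0 t) hFcont.continuousOn
        hFdiff.differentiableOn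
      intro x hx
      rw [interior_Icc] at hx
      have hxpos : 0 < γ x := hpos x ⟨hx.1, by linarith [hx.2]⟩
      have hK1 : -(deriv (deriv γ) x) / γ x ≤ 1 := hcase x hx
      have h2 : -(deriv (deriv γ) x) ≤ γ x := by rwa [div_le_one hxpos] at hK1
      rw [(hFd x).deriv]; linarith
    have h3 := hmono ⟨le_refl 0, ht0⟩ ⟨ht0, le_refl t⟩ ht0
    have : (0:ℝ) ≤ F t := by linarith
    simpa [hFdef] using this
  · push_neg at hcase
    obtain ⟨s₀, hs₀, hKs₀⟩ := hcase
    have hanti : AntitoneOn F (Set.Icc t (ℓ/2)) := by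
      apply antitoneOn_of_deriv_nonpos (convex_Icc t (ℓ/2)) hFcont.continuousOn
        hFdiff.differentiableOn
      intro x hx
      rw [interior_Icc] at hx
      have hxI : x ∈ Set.Ioc (0:ℝ) (ℓ/2) := ⟨by linarith [hs₀.1, hx.1], hx.2.le⟩
      have hs₀I : s₀ ∈ Set.Ioc (0:ℝ) (ℓ/2) := ⟨hs₀.1, by linarith [hs₀.2]⟩
      have hle := hK s₀ hs₀I x hxI (by linarith [hs₀.2, hx.1])
      have hxpos : 0 < γ x := hpos x ⟨hxI.1, by linarith [hxI.2]⟩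
      have h1 : 1 < -(deriv (deriv γ) x) / γ x := lt_of_lt_of_le hKs₀ hle
      have h2 : γ x < -(deriv (deriv γ) x) := by rwa [lt_div_iff₀ hxpos, one_mul] at h1
      rw [(hFd x).deriv]; linarith
    have h3 := hanti ⟨le_refl t, ht2⟩ ⟨ht2, le_refl _⟩ ht2
    have h4 : (0:ℝ) ≤ F t := hFhalf ▸ h3
    simpa [hFdef] using h4
end

section
/- For every δ ∈ (0, π/2) and every ε > 0 there exist ℓ > δ and a normalized profile function γ of length ℓ such that γ''(t) ≤ 0 for all t ∈ [0,ℓ] (i.e., the associated surface of revolution S²_γ is convex) and γ'(δ) < ε. -/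
section
open Real Set intervalIntegral
noncomputable def gg (k : ℕ) (t : ℝ) : ℝ := Real.sin (Real.pi/2 * (Real.cos t)^(2*k+1))

lemma gg_contDiff (k : ℕ) : ContDiff ℝ (⊤ : ℕ∞) (gg k) :=
  Real.contDiff_sin.comp (contDiff_const.mul (Real.contDiff_cos.pow _))

lemma gg_cont (k : ℕ) : Continuous (gg k) := (gg_contDiff k).continuous

noncomputable def G (k : ℕ) (t : ℝ) : ℝ := ∫ s in (0:ℝ)..t, gg k s

lemma G_hasDerivAt (k : ℕ) (t : ℝ) : HasDerivAt (G k) (gg k t) t :=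
  ((gg_cont k).integral_hasStrictDerivAt 0 t).hasDerivAt

lemma G_deriv (k : ℕ) : deriv (G k) = gg k := funext fun t => (G_hasDerivAt k t).deriv

lemma G_contDiff (k : ℕ) : ContDiff ℝ (⊤ : ℕ∞) (G k) := by
  rw [contDiff_infty_iff_deriv]
  exact ⟨fun t => (G_hasDerivAt k t).differentiableAt, by rw [G_deriv]; exact gg_contDiff k⟩

lemma gg_even (k : ℕ) (t : ℝ) : gg k (-t) = gg k t := by simp [gg]

lemma odd_m (k : ℕ) : Odd (2*k+1) := ⟨k, by ring⟩

lemma gg_anti_pi (k : ℕ) (t : ℝ) : gg k (Real.pi - t) = - gg k t := by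
  rw [gg, gg, Real.cos_pi_sub, (odd_m k).neg_pow, mul_neg, Real.sin_neg]

lemma gg_intble (k : ℕ) (a b : ℝ) : IntervalIntegrable (gg k) MeasureTheory.volume a b :=
  (gg_cont k).intervalIntegrable a b

lemma G_sub (k : ℕ) (a b : ℝ) : G k b - G k a = ∫ s in a..b, gg k s := by
  rw [G, G, ← intervalIntegral.integral_add_adjacent_intervals (gg_intble k 0 a) (gg_intble k a b)]
  ring

lemma G_odd (k : ℕ) (t : ℝ) : G k (-t) = - G k t := by
  have h := intervalIntegral.integral_comp_neg (a := t) (b := 0) (fun s => gg k s)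
  simp only [gg_even, neg_zero] at h
  rw [G, G, ← h, intervalIntegral.integral_symm]

lemma G_symm (k : ℕ) (t : ℝ) : G k (Real.pi - t) = G k t := by
  set F : ℝ → ℝ := fun t => G k (Real.pi - t) - G k t with hF
  have hd : ∀ x, HasDerivAt F 0 x := by
    intro x
    have h1 : HasDerivAt (fun t : ℝ => G k (Real.pi - t)) (gg k (Real.pi - x) * (-1)) x :=
      (G_hasDerivAt k (Real.pi - x)).comp x ((hasDerivAt_id x).const_sub Real.pi)
    have := h1.sub (G_hasDerivAt k x)
    have e : gg k (Real.pi - x) * (-1) - gg k x = 0 := by rw [gg_anti_pi]; ring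
    rw [e] at this; exact this
  have hconst : F t = F (Real.pi/2) :=
    is_const_of_deriv_eq_zero (fun x => (hd x).differentiableAt) (fun x => (hd x).deriv) t (Real.pi/2)
  have : F (Real.pi/2) = 0 := by simp [hF]; ring_nf
  have := hconst.trans this
  simpa [hF, sub_eq_zero] using this

lemma arg_mem (k : ℕ) (t : ℝ) :
    Real.pi/2 * (Real.cos t)^(2*k+1) ∈ Icc (-(Real.pi/2)) (Real.pi/2) := by
  have h1 : |Real.cos t ^ (2*k+1)| ≤ 1 := by
    rw [abs_pow]; exact pow_le_one₀ (abs_nonneg _) (Real.abs_cos_le_one t)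
  have h2 := abs_le.1 h1
  constructor
  · nlinarith [Real.pi_pos]
  · nlinarith [Real.pi_pos]

lemma gg_le_one (k : ℕ) (t : ℝ) : gg k t ≤ 1 := Real.sin_le_one _

lemma gg_nonneg (k : ℕ) {t : ℝ} (ht : t ∈ Icc 0 (Real.pi/2)) : 0 ≤ gg k t := by
  have hc : 0 ≤ Real.cos t := Real.cos_nonneg_of_mem_Icc ⟨by linarith [ht.1, Real.pi_pos], ht.2⟩
  apply Real.sin_nonneg_of_nonneg_of_le_pi
  · positivity
  · have := (arg_mem k t).2; linarith [Real.pi_pos]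

lemma gg_pos (k : ℕ) {t : ℝ} (ht : t ∈ Ico 0 (Real.pi/2)) : 0 < gg k t := by
  have hc : 0 < Real.cos t := Real.cos_pos_of_mem_Ioo ⟨by linarith [ht.1, Real.pi_pos], ht.2⟩
  apply Real.sin_pos_of_pos_of_lt_pi
  · positivity
  · have := (arg_mem k t).2; linarith [Real.pi_pos]

noncomputable def ggD (k : ℕ) (t : ℝ) : ℝ :=
  Real.cos (Real.pi/2 * (Real.cos t)^(2*k+1)) *
    (Real.pi/2 * (((2*k+1 : ℕ) : ℝ) * (Real.cos t)^(2*k) * (-Real.sin t)))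

lemma gg_hasDerivAt (k : ℕ) (t : ℝ) : HasDerivAt (gg k) (ggD k t) t := by
  have h2 : HasDerivAt (fun t : ℝ => (Real.cos t)^(2*k+1))
      (((2*k+1 : ℕ) : ℝ) * (Real.cos t)^(2*k) * (-Real.sin t)) t := by
    have := (Real.hasDerivAt_cos t).fun_pow (2*k+1)
    simpa using this
  have h3 := h2.const_mul (Real.pi/2)
  have h4 := (Real.hasDerivAt_sin (Real.pi/2 * (Real.cos t)^(2*k+1))).comp t h3
  exact h4

lemma ggD_nonpos (k : ℕ) {t : ℝ} (ht : t ∈ Icc 0 Real.pi) : ggD k t ≤ 0 := by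
  have h1 : 0 ≤ Real.cos (Real.pi/2 * (Real.cos t)^(2*k+1)) :=
    Real.cos_nonneg_of_mem_Icc (arg_mem k t)
  have h2 : 0 ≤ (Real.cos t)^(2*k) := (even_two_mul k).pow_nonneg _
  have h3 : 0 ≤ Real.sin t := Real.sin_nonneg_of_nonneg_of_le_pi ht.1 ht.2
  have h4 : (0:ℝ) ≤ ((2*k+1 : ℕ) : ℝ) := Nat.cast_nonneg _
  have hpi := Real.pi_pos
  unfold ggD
  have : Real.pi/2 * (((2*k+1 : ℕ) : ℝ) * (Real.cos t)^(2*k) * (-Real.sin t)) ≤ 0 := by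
    nlinarith [mul_nonneg (mul_nonneg (mul_nonneg (by positivity : (0:ℝ) ≤ Real.pi/2) h4) h2) h3]
  exact mul_nonpos_of_nonneg_of_nonpos h1 this

lemma gg_deriv_eq (k : ℕ) : deriv (gg k) = ggD k := funext fun t => (gg_hasDerivAt k t).deriv

lemma gg_antitone (k : ℕ) : AntitoneOn (gg k) (Icc 0 Real.pi) := by
  apply antitoneOn_of_deriv_nonpos (convex_Icc 0 Real.pi) (gg_cont k).continuousOn
  · exact fun x _ => ((gg_hasDerivAt k x).differentiableAt).differentiableWithinAt
  · intro x hx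
    rw [interior_Icc] at hx
    rw [gg_deriv_eq]
    exact ggD_nonpos k ⟨hx.1.le, hx.2.le⟩

lemma G_zero (k : ℕ) : G k 0 = 0 := intervalIntegral.integral_same

lemma G_pi (k : ℕ) : G k Real.pi = 0 := by
  have := G_symm k Real.pi
  simp only [sub_self] at this
  rw [← this, G_zero]

lemma G_pos (k : ℕ) {t : ℝ} (ht : t ∈ Ioo 0 Real.pi) : 0 < G k t := by
  have hpi := Real.pi_pos
  rcases le_or_gt t (Real.pi/2) with h | h
  · apply intervalIntegral.intervalIntegral_pos_of_pos_on (gg_intble k 0 t) _ ht.1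
    intro x hx
    exact gg_pos k ⟨hx.1.le, lt_of_lt_of_le hx.2 h⟩
  · rw [← G_symm]
    apply intervalIntegral.intervalIntegral_pos_of_pos_on (gg_intble k 0 _) _ (by linarith [ht.2])
    intro x hx
    exact gg_pos k ⟨hx.1.le, by linarith [hx.2]⟩

lemma G_mono (k : ℕ) {a b : ℝ} (ha : 0 ≤ a) (hab : a ≤ b) (hb : b ≤ Real.pi/2) :
    G k a ≤ G k b := by
  have : 0 ≤ G k b - G k a := by
    rw [G_sub]
    apply intervalIntegral.integral_nonneg hab
    intro x hx
    exact gg_nonneg k ⟨le_trans ha hx.1, le_trans hx.2 hb⟩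
  linarith

lemma G_le_h (k : ℕ) {t : ℝ} (ht : t ∈ Icc 0 Real.pi) : G k t ≤ G k (Real.pi/2) := by
  have hpi := Real.pi_pos
  rcases le_or_gt t (Real.pi/2) with h | h
  · exact G_mono k ht.1 h le_rfl
  · rw [← G_symm]
    exact G_mono k (by linarith [ht.2]) (by linarith) le_rfl

lemma G_nonneg (k : ℕ) {t : ℝ} (ht : t ∈ Icc 0 Real.pi) : 0 ≤ G k t := by
  rcases eq_or_lt_of_le ht.1 with h | h
  · rw [← h, G_zero]
  rcases eq_or_lt_of_le ht.2 with h2 | h2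
  · rw [h2, G_pi]
  exact (G_pos k ⟨h, h2⟩).le

lemma G_cont (k : ℕ) : Continuous (G k) := (G_contDiff k).continuous

lemma G_intble (k : ℕ) (a b : ℝ) : IntervalIntegrable (G k) MeasureTheory.volume a b :=
  (G_cont k).intervalIntegrable a b

noncomputable def AA (k : ℕ) : ℝ := ∫ t in (0:ℝ)..Real.pi, G k t

lemma A_pos (k : ℕ) : 0 < AA k :=
  intervalIntegral.intervalIntegral_pos_of_pos_on (G_intble k 0 Real.pi)
    (fun x hx => G_pos k hx) Real.pi_pos

lemma A_le (k : ℕ) : AA k ≤ Real.pi * G k (Real.pi/2) := by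
  have h := intervalIntegral.integral_mono_on (μ := MeasureTheory.volume) Real.pi_pos.le
    (G_intble k 0 Real.pi) (intervalIntegrable_const) (fun x hx => G_le_h k hx)
  rw [intervalIntegral.integral_const, sub_zero, smul_eq_mul] at h
  exact h

lemma integral_le_const (k : ℕ) {a b C : ℝ} (hab : a ≤ b)
    (h : ∀ x ∈ Icc a b, gg k x ≤ C) : (∫ s in a..b, gg k s) ≤ (b - a) * C := by
  have := intervalIntegral.integral_mono_on (μ := MeasureTheory.volume) hab
    (gg_intble k a b) (intervalIntegrable_const) h
  rwa [intervalIntegral.integral_const, smul_eq_mul] at this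

lemma const_le_integral (k : ℕ) {a b C : ℝ} (hab : a ≤ b)
    (h : ∀ x ∈ Icc a b, C ≤ gg k x) : (b - a) * C ≤ ∫ s in a..b, gg k s := by
  have := intervalIntegral.integral_mono_on (μ := MeasureTheory.volume) hab
    (intervalIntegrable_const) (gg_intble k a b) h
  rwa [intervalIntegral.integral_const, smul_eq_mul] at this

lemma h_le_two_quarter (k : ℕ) : G k (Real.pi/2) ≤ 2 * G k (Real.pi/4) := by
  have hpi := Real.pi_pos
  have h1 : G k (Real.pi/2) - G k (Real.pi/4) = ∫ s in (Real.pi/4)..(Real.pi/2), gg k s :=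
    G_sub k _ _
  have h2 : (∫ s in (Real.pi/4)..(Real.pi/2), gg k s) ≤ (Real.pi/2 - Real.pi/4) * gg k (Real.pi/4) := by
    apply integral_le_const k (by linarith)
    intro x hx
    exact gg_antitone k ⟨by linarith [hx.1], by linarith [hx.1]⟩
      ⟨by linarith [hx.1], by linarith [hx.2]⟩ hx.1
  have h3 : (Real.pi/4 - 0) * gg k (Real.pi/4) ≤ ∫ s in (0:ℝ)..(Real.pi/4), gg k s := by
    apply const_le_integral k (by linarith)
    intro x hx
    exact gg_antitone k ⟨hx.1, by linarith [hx.2]⟩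
      ⟨by linarith, by linarith⟩ hx.2
  have h4 : (∫ s in (0:ℝ)..(Real.pi/4), gg k s) = G k (Real.pi/4) := by
    rw [← G_sub, G_zero, sub_zero]
  nlinarith

lemma quarter_le_A (k : ℕ) : Real.pi/4 * G k (Real.pi/4) ≤ AA k := by
  have hpi := Real.pi_pos
  have h1 : (Real.pi/2 - Real.pi/4) * G k (Real.pi/4) ≤ ∫ s in (Real.pi/4)..(Real.pi/2), G k s := by
    have := intervalIntegral.integral_mono_on (μ := MeasureTheory.volume)
      (by linarith : Real.pi/4 ≤ Real.pi/2) (intervalIntegrable_const) (G_intble k _ _)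
      (fun x hx => G_mono k (by linarith [hx.1]) hx.1 (by linarith [hx.2]))
    rwa [intervalIntegral.integral_const, smul_eq_mul] at this
  have h2 : (0:ℝ) ≤ ∫ s in (0:ℝ)..(Real.pi/4), G k s := by
    apply intervalIntegral.integral_nonneg (by linarith)
    intro x hx
    exact G_nonneg k ⟨hx.1, by linarith [hx.2]⟩
  have h3 : (0:ℝ) ≤ ∫ s in (Real.pi/2)..Real.pi, G k s := by
    apply intervalIntegral.integral_nonneg (by linarith)
    intro x hx
    exact G_nonneg k ⟨by linarith [hx.1], hx.2⟩
  have h4 : AA k = (∫ s in (0:ℝ)..(Real.pi/4), G k s) + (∫ s in (Real.pi/4)..(Real.pi/2), G k s)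
      + (∫ s in (Real.pi/2)..Real.pi, G k s) := by
    rw [AA, ← intervalIntegral.integral_add_adjacent_intervals (G_intble k 0 (Real.pi/2)) (G_intble k (Real.pi/2) Real.pi),
      ← intervalIntegral.integral_add_adjacent_intervals (G_intble k 0 (Real.pi/4)) (G_intble k (Real.pi/4) (Real.pi/2))]
  nlinarith

lemma h_ge_A : ∀ k : ℕ, Real.pi/8 * G k (Real.pi/2) ≤ AA k := by
  intro k
  have h1 := h_le_two_quarter k
  have h2 := quarter_le_A k
  have hpi := Real.pi_pos
  nlinarith

lemma h_small {η : ℝ} (hη : 0 < η) : ∃ k : ℕ, G k (Real.pi/2) < η := by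
  have hpi := Real.pi_pos
  set t₀ : ℝ := min (η/2) (Real.pi/4) with ht₀def
  have ht₀pos : 0 < t₀ := lt_min (by linarith) (by linarith)
  have ht₀le : t₀ ≤ Real.pi/4 := min_le_right _ _
  have ht₀η : t₀ ≤ η/2 := min_le_left _ _
  have hcos1 : Real.cos t₀ < 1 := by
    have := Real.strictAntiOn_cos (left_mem_Icc.2 hpi.le)
      ⟨ht₀pos.le, by linarith⟩ ht₀pos
    simpa using this
  have hcos0 : 0 < Real.cos t₀ := Real.cos_pos_of_mem_Ioo ⟨by linarith, by linarith⟩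
  -- choose k with (π/2) * (π/2) * cos t₀ ^ (2k+1) < η/2
  have htend : Filter.Tendsto (fun n : ℕ => Real.cos t₀ ^ n) Filter.atTop (nhds 0) :=
    tendsto_pow_atTop_nhds_zero_of_lt_one hcos0.le hcos1
  have hev : ∀ᶠ n : ℕ in Filter.atTop, Real.cos t₀ ^ n < η/2 / (Real.pi/2 * (Real.pi/2)) := by
    apply htend.eventually (gt_mem_nhds _)
    positivity
  obtain ⟨N, hN⟩ := hev.exists
  refine ⟨N, ?_⟩
  have hmono : Real.cos t₀ ^ (2*N+1) ≤ Real.cos t₀ ^ N :=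
    pow_le_pow_of_le_one hcos0.le hcos1.le (by omega)
  -- bound gg N t₀
  have hggt₀ : gg N t₀ ≤ Real.pi/2 * Real.cos t₀ ^ (2*N+1) := by
    rcases eq_or_lt_of_le (by positivity : (0:ℝ) ≤ Real.pi/2 * Real.cos t₀ ^ (2*N+1)) with h | h
    · rw [gg, ← h, Real.sin_zero]
    · exact (Real.sin_lt h).le
  have hsplit : G N (Real.pi/2) = (∫ s in (0:ℝ)..t₀, gg N s) + ∫ s in t₀..(Real.pi/2), gg N s := by
    rw [G, ← intervalIntegral.integral_add_adjacent_intervals (gg_intble N 0 t₀) (gg_intble N t₀ _)]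
  have hI1 : (∫ s in (0:ℝ)..t₀, gg N s) ≤ (t₀ - 0) * 1 :=
    integral_le_const N ht₀pos.le (fun x _ => gg_le_one N x)
  have hI2 : (∫ s in t₀..(Real.pi/2), gg N s) ≤ (Real.pi/2 - t₀) * gg N t₀ := by
    apply integral_le_const N (by linarith)
    intro x hx
    exact gg_antitone N ⟨ht₀pos.le, by linarith⟩ ⟨by linarith [hx.1], by linarith [hx.2]⟩ hx.1
  have hgg_nn : 0 ≤ gg N t₀ := gg_nonneg N ⟨ht₀pos.le, by linarith⟩
  have hkey : (Real.pi/2 - t₀) * gg N t₀ < η/2 := by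
    have hb : Real.pi/2 * Real.cos t₀ ^ (2*N+1) < η/2 / (Real.pi/2) := by
      have h1 : Real.cos t₀ ^ (2*N+1) < η/2 / (Real.pi/2 * (Real.pi/2)) := lt_of_le_of_lt hmono hN
      calc Real.pi/2 * Real.cos t₀ ^ (2*N+1) < Real.pi/2 * (η/2 / (Real.pi/2 * (Real.pi/2))) := by
            apply mul_lt_mul_of_pos_left h1 (by positivity)
        _ = η/2 / (Real.pi/2) := by field_simp
    have hgg2 : gg N t₀ < η/2 / (Real.pi/2) := lt_of_le_of_lt hggt₀ hb
    calc (Real.pi/2 - t₀) * gg N t₀ ≤ Real.pi/2 * gg N t₀ := by nlinarith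
      _ < Real.pi/2 * (η/2 / (Real.pi/2)) := by apply mul_lt_mul_of_pos_left hgg2 (by positivity)
      _ = η/2 := by field_simp
  calc G N (Real.pi/2) ≤ (t₀ - 0) * 1 + (Real.pi/2 - t₀) * gg N t₀ := by rw [hsplit]; exact add_le_add hI1 hI2
    _ < η/2 + η/2 := by
        apply add_lt_add_of_le_of_lt (by linarith) hkey
    _ = η := by ring

lemma iteratedDeriv_reflect {f : ℝ → ℝ} {a : ℝ} (hf : ∀ x, f (2*a - x) = - f x) :
    ∀ n : ℕ, ∀ x : ℝ, iteratedDeriv n f (2*a - x) = (-1)^(n+1) * iteratedDeriv n f x := by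
  intro n
  induction n with
  | zero => intro x; simpa using hf x
  | succ n ih =>
    intro x
    have hfun : (fun x => iteratedDeriv n f (2*a - x)) =
        fun x => (-1:ℝ)^(n+1) * iteratedDeriv n f x := funext ih
    have h1 : deriv (fun x => iteratedDeriv n f (2*a - x)) x =
        -deriv (iteratedDeriv n f) (2*a - x) := deriv_comp_const_sub _ _ _
    have h2 : deriv (fun x => (-1:ℝ)^(n+1) * iteratedDeriv n f x) x =
        (-1:ℝ)^(n+1) * deriv (iteratedDeriv n f) x := deriv_const_mul_field _
    rw [iteratedDeriv_succ]
    have h3 : -deriv (iteratedDeriv n f) (2*a - x) = (-1:ℝ)^(n+1) * deriv (iteratedDeriv n f) x := by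
      rw [← h1, hfun, h2]
    have : deriv (iteratedDeriv n f) (2*a - x) = (-1:ℝ)^(n+2) * deriv (iteratedDeriv n f) x := by
      rw [← neg_neg (deriv (iteratedDeriv n f) (2*a - x)), h3]; ring
    simpa [pow_succ] using this

lemma iteratedDeriv_even_zero {f : ℝ → ℝ} {a : ℝ} (hf : ∀ x, f (2*a - x) = - f x) (n : ℕ) :
    iteratedDeriv (2*n) f a = 0 := by
  have := iteratedDeriv_reflect hf (2*n) a
  have h2a : 2*a - a = a := by ring
  rw [h2a] at this
  have hpow : ((-1:ℝ))^(2*n+1) = -1 := Odd.neg_one_pow ⟨n, by ring⟩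
  rw [hpow] at this
  linarith

lemma G_two_pi (k : ℕ) (u : ℝ) : G k (2*Real.pi - u) = - G k u := by
  have h1 := G_symm k (u - Real.pi)
  have h2 : Real.pi - (u - Real.pi) = 2*Real.pi - u := by ring
  rw [h2] at h1
  have h3 : G k (u - Real.pi) = - G k u := by
    have := G_odd k (Real.pi - u)
    have h4 : -(Real.pi - u) = u - Real.pi := by ring
    rw [h4] at this
    rw [this, G_symm]
  rw [h1, h3]

lemma abs_gg_lt_one (k : ℕ) {u : ℝ} (hu : u ∈ Ioo 0 Real.pi) : |gg k u| < 1 := by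
  have hpi := Real.pi_pos
  have hc1 : Real.cos u < 1 := by
    have := Real.strictAntiOn_cos (left_mem_Icc.2 hpi.le) ⟨hu.1.le, hu.2.le⟩ hu.1
    simpa using this
  have hc2 : -1 < Real.cos u := by
    have := Real.strictAntiOn_cos ⟨hu.1.le, hu.2.le⟩ (right_mem_Icc.2 hpi.le) hu.2
    simpa using this
  have habs : |Real.cos u| < 1 := abs_lt.2 ⟨hc2, hc1⟩
  have hpow : |Real.cos u ^ (2*k+1)| < 1 := by
    rw [abs_pow]
    exact pow_lt_one₀ (abs_nonneg _) habs (by omega)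
  have hpow' := abs_lt.1 hpow
  set x := Real.pi/2 * Real.cos u ^ (2*k+1) with hx
  have hx1 : x < Real.pi/2 := by nlinarith [hpow'.2]
  have hx2 : -(Real.pi/2) < x := by nlinarith [hpow'.1]
  have hmem : x ∈ Icc (-(Real.pi/2)) (Real.pi/2) := ⟨hx2.le, hx1.le⟩
  have hs1 : Real.sin x < 1 := by
    have := Real.strictMonoOn_sin hmem (right_mem_Icc.2 (by linarith)) hx1
    rwa [Real.sin_pi_div_two] at this
  have hs2 : -1 < Real.sin x := by
    have := Real.strictMonoOn_sin (left_mem_Icc.2 (by linarith)) hmem hx2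
    rwa [Real.sin_neg, Real.sin_pi_div_two] at this
  exact abs_lt.2 ⟨hs2, hs1⟩

lemma gg_zero_val (k : ℕ) : gg k 0 = 1 := by
  rw [gg, Real.cos_zero, one_pow, mul_one, Real.sin_pi_div_two]

lemma gg_pi_val (k : ℕ) : gg k Real.pi = -1 := by
  rw [gg, Real.cos_pi, (odd_m k).neg_pow, one_pow, mul_neg, mul_one, Real.sin_neg,
    Real.sin_pi_div_two]

lemma arith_bound {h A c δ ε : ℝ} (hhpos : 0 < h) (hApos : 0 < A) (hδ0 : 0 < δ) (hε : 0 < ε)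
    (hAge : Real.pi/8 * h ≤ A) (hc2 : c^2 = 2/A) (hc0 : 0 < c)
    (hηle : h < ε^2*δ^2/9) : c * h < ε * δ := by
  have hpi := Real.pi_pos
  have hc2A : c^2 * A = 2 := by rw [hc2]; field_simp
  have hkey : (c*h)^2 < (ε*δ)^2 := by
    have h1 : c^2 * (Real.pi/8 * h) ≤ 2 := by nlinarith [sq_nonneg c]
    have h2 : c^2 * h ≤ 16/Real.pi := by
      rw [le_div_iff₀ hpi]
      nlinarith
    have h3 : Real.pi > 3 := Real.pi_gt_three
    have h4 : c^2*h^2 ≤ 16/Real.pi * h := by nlinarith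
    have h5 : 16/Real.pi * h < 16/3 * h := by
      apply mul_lt_mul_of_pos_right _ hhpos
      rw [div_lt_div_iff₀ hpi (by norm_num)]
      nlinarith
    calc (c*h)^2 = c^2*h^2 := by ring
      _ ≤ 16/Real.pi * h := h4
      _ < 16/3 * h := h5
      _ < 16/3 * (ε^2*δ^2/9) := by nlinarith
      _ ≤ (ε*δ)^2 := by nlinarith [sq_nonneg (ε*δ)]
  exact lt_of_pow_lt_pow_left₀ 2 (by positivity) hkey


end

open Real Set intervalIntegral

/-- For every `δ ∈ (0, π/2)` and `ε > 0` there exist `ℓ > δ` and a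
normalized profile function `γ` of length `ℓ` which is concave (`γ'' ≤ 0`, so the
associated surface of revolution is convex) and has `γ' δ < ε`. -/
theorem stmt_3 (δ ε : ℝ) (hδ : δ ∈ Set.Ioo 0 (Real.pi / 2)) (hε : 0 < ε) :
    ∃ ℓ : ℝ, ∃ γ : ℝ → ℝ, δ < ℓ ∧ IsProfileFunction ℓ γ ∧ IsNormalizedProfile ℓ γ ∧
      (∀ t ∈ Set.Icc 0 ℓ, deriv (deriv γ) t ≤ 0) ∧ deriv γ δ < ε := by
  obtain ⟨hδ0, hδπ⟩ := hδ
  have hpi := Real.pi_pos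
  set η : ℝ := min (ε^2*δ^2/9) (2/Real.pi) with hηdef
  have hηpos : 0 < η := lt_min (by positivity) (by positivity)
  obtain ⟨k, hk⟩ := h_small hηpos
  set h : ℝ := G k (Real.pi/2) with hhdef
  have hhpos : 0 < h := G_pos k ⟨by linarith, by linarith⟩
  set A : ℝ := AA k with hAdef
  have hApos : 0 < A := A_pos k
  have hAle : A ≤ Real.pi * h := A_le k
  have hA2 : A < 2 := by
    have : h < 2/Real.pi := lt_of_lt_of_le hk (min_le_right _ _)
    calc A ≤ Real.pi * h := hAle
      _ < Real.pi * (2/Real.pi) := by exact mul_lt_mul_of_pos_left this hpi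
      _ = 2 := by field_simp
  have hAge : Real.pi/8 * h ≤ A := h_ge_A k
  set c : ℝ := Real.sqrt (2/A) with hcdef
  have hc2 : c^2 = 2/A := Real.sq_sqrt (by positivity)
  have hc0 : 0 < c := Real.sqrt_pos.2 (by positivity)
  have hc1 : 1 < c := by nlinarith [hc2, div_lt_div_of_pos_left (by norm_num : (0:ℝ) < 2) hApos hA2]
  have hcne : c ≠ 0 := hc0.ne'
  set ℓ : ℝ := c * Real.pi with hℓdef
  have hℓpos : 0 < ℓ := by positivity
  have hδℓ : δ < ℓ := by nlinarith
  set γ : ℝ → ℝ := fun t => c * G k (t / c) with hγdef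
  -- first derivative
  have Hγ : ∀ t, HasDerivAt γ (gg k (t/c)) t := by
    intro t
    have h1 : HasDerivAt (fun t : ℝ => G k (t/c)) (gg k (t/c) * (1/c)) t := by
      have := (G_hasDerivAt k (t/c)).comp t ((hasDerivAt_id t).div_const c)
      simpa [Function.comp_def] using this
    have h2 := h1.const_mul c
    have e : c * (gg k (t/c) * (1/c)) = gg k (t/c) := by field_simp
    rw [e] at h2; exact h2
  have hderiv : deriv γ = fun t => gg k (t/c) := funext fun t => (Hγ t).deriv
  -- second derivative
  have Hγ2 : ∀ t, HasDerivAt (fun t => gg k (t/c)) (ggD k (t/c) * (1/c)) t := by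
    intro t
    have := (gg_hasDerivAt k (t/c)).comp t ((hasDerivAt_id t).div_const c)
    simpa [Function.comp_def] using this
  -- membership helpers
  have hmemIcc : ∀ t ∈ Icc (0:ℝ) ℓ, t/c ∈ Icc (0:ℝ) Real.pi := by
    intro t ht
    constructor
    · exact div_nonneg ht.1 hc0.le
    · rw [div_le_iff₀ hc0]; rw [hℓdef] at ht; nlinarith [ht.2]
  have hmemIoo : ∀ t ∈ Ioo (0:ℝ) ℓ, t/c ∈ Ioo (0:ℝ) Real.pi := by
    intro t ht
    constructor
    · exact div_pos ht.1 hc0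
    · rw [div_lt_iff₀ hc0]; rw [hℓdef] at ht; nlinarith [ht.2]
  have hℓc : ℓ / c = Real.pi := by rw [hℓdef]; field_simp
  have hAA : (∫ x in (0:ℝ)..Real.pi, G k x) = A := hAdef.symm
  have hsmooth : ContDiff ℝ (⊤ : ℕ∞) γ :=
    contDiff_const.mul ((G_contDiff k).comp (contDiff_id.div_const c))
  clear_value h A c ℓ γ
  refine ⟨ℓ, γ, hδℓ, ?_, ?_, ?_, ?_⟩
  · constructor
    · exact hℓpos
    · exact hsmooth
    · simp [hγdef, G_zero]
    · simp [hγdef, hℓc, G_pi]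
    · intro t ht
      have h1 := G_pos k (hmemIoo t ht)
      rw [hγdef]
      exact mul_pos hc0 h1
    · rw [hderiv]; simp [gg_zero_val]
    · rw [hderiv]; simp only [hℓc]; exact gg_pi_val k
    · intro t ht
      rw [hderiv]
      exact abs_gg_lt_one k (hmemIoo t ht)
    · intro n
      apply iteratedDeriv_even_zero (a := 0)
      intro x
      simp only [hγdef, two_mul, zero_sub, add_zero, zero_add]
      rw [neg_div, G_odd]
      ring
    · intro n
      apply iteratedDeriv_even_zero (a := ℓ)
      intro x
      simp only [hγdef]
      have : (2*ℓ - x)/c = 2*Real.pi - x/c := by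
        rw [hℓdef]; field_simp
      rw [this, G_two_pi]
      ring
  · show (∫ t in (0:ℝ)..ℓ, γ t) = 2
    simp only [hγdef]
    rw [intervalIntegral.integral_const_mul, intervalIntegral.integral_comp_div _ hcne]
    simp only [zero_div, hℓc]
    rw [smul_eq_mul]
    rw [hAA, ← mul_assoc]
    have hcc : c * c = 2/A := by nlinarith [hc2]
    rw [hcc]
    field_simp
  · intro t ht
    rw [hderiv, (Hγ2 t).deriv]
    have h1 : ggD k (t/c) ≤ 0 := ggD_nonpos k (hmemIcc t ht)
    have h2 : (0:ℝ) ≤ 1/c := by positivity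
    exact mul_nonpos_of_nonpos_of_nonneg h1 h2
  · -- mean value theorem bound
    obtain ⟨x, hx, hslope⟩ := exists_hasDerivAt_eq_slope γ (fun t => gg k (t/c)) hδ0
      (hsmooth.continuous.continuousOn)
      (fun x _ => Hγ x)
    have hγ0 : γ 0 = 0 := by simp [hγdef, G_zero]
    rw [hγ0, sub_zero, sub_zero] at hslope
    have hδmem : δ/c ∈ Icc (0:ℝ) Real.pi :=
      hmemIcc δ ⟨hδ0.le, hδℓ.le⟩
    have hxmem : x/c ∈ Icc (0:ℝ) Real.pi := by
      constructor
      · exact div_nonneg hx.1.le hc0.le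
      · have := hδmem.2; rw [div_le_iff₀ hc0] at this ⊢; nlinarith [hx.2]
    have hmono : gg k (δ/c) ≤ gg k (x/c) := by
      apply gg_antitone k hxmem hδmem
      exact (div_le_div_iff_of_pos_right hc0).2 hx.2.le
    rw [hderiv]
    have hγδ : γ δ ≤ c * h := by
      have h1 := G_le_h k hδmem
      rw [← hhdef] at h1
      simp only [hγdef]
      exact mul_le_mul_of_nonneg_left h1 hc0.le
    have hch : c * h < ε * δ := by
      have hηle : h < ε^2*δ^2/9 := lt_of_lt_of_le hk (min_le_left _ _)
      exact arith_bound hhpos hApos hδ0 hε hAge hc2 hc0 hηle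
    calc gg k (δ/c) ≤ gg k (x/c) := hmono
      _ = γ δ / δ := hslope
      _ ≤ c * h / δ := (div_le_div_iff_of_pos_right hδ0).2 hγδ
      _ < ε := by rw [div_lt_iff₀ hδ0]; exact hch
end

section
/- For every C > 0 there exist ℓ > 0, a normalized profile function γ of length ℓ with γ''(t) ≤ 0 for all t ∈ [0,ℓ] (so the associated surface of revolution S²_γ is convex with total area 4π), and a point t₀ ∈ (0,ℓ) such that |Γ(t₀) + γ'(t₀)| > C·γ(t₀); equivalently, m_γ := sup_{t∈(0,ℓ)} |Γ(t)+γ'(t)|/γ(t) > C. -/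
set_option maxHeartbeats 1000000
open Real

noncomputable def thA (δ : ℝ) : ℝ := arcsin (1 / Real.sqrt (1+δ))
noncomputable def omg (δ : ℝ) : ℝ := Real.sqrt (Real.sqrt δ * thA δ)
noncomputable def gam5 (δ : ℝ) (t : ℝ) : ℝ :=
  (Real.sqrt δ / omg δ) * (Real.sin (omg δ * t) / Real.sqrt ((Real.sin (omg δ * t))^2 + δ))
noncomputable def gd1 (δ : ℝ) (t : ℝ) : ℝ :=
  δ * Real.sqrt δ * Real.cos (omg δ * t) /
    (((Real.sin (omg δ * t))^2 + δ) * Real.sqrt ((Real.sin (omg δ * t))^2 + δ))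
noncomputable def gd2 (δ : ℝ) (t : ℝ) : ℝ :=
  -(omg δ * (δ * Real.sqrt δ) * Real.sin (omg δ * t) *
      (((Real.sin (omg δ * t))^2 + δ) + 3 * (Real.cos (omg δ * t))^2)) /
    ((((Real.sin (omg δ * t))^2 + δ))^2 * Real.sqrt ((Real.sin (omg δ * t))^2 + δ))

lemma thA_pos {δ : ℝ} (hδ : 0 < δ) : 0 < thA δ := by
  have h1 : 0 < Real.sqrt (1+δ) := Real.sqrt_pos.2 (by linarith)
  exact Real.arcsin_pos.2 (by positivity)

lemma omg_pos {δ : ℝ} (hδ : 0 < δ) : 0 < omg δ :=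
  Real.sqrt_pos.2 (mul_pos (Real.sqrt_pos.2 hδ) (thA_pos hδ))

lemma omg_sq {δ : ℝ} (hδ : 0 < δ) : (omg δ)^2 = Real.sqrt δ * thA δ :=
  Real.sq_sqrt (le_of_lt (mul_pos (Real.sqrt_pos.2 hδ) (thA_pos hδ)))

lemma hasDerivAt_lin (ω t : ℝ) : HasDerivAt (fun x : ℝ => ω * x) ω t := by
  simpa using (hasDerivAt_id t).const_mul ω

lemma hasDerivAt_sin_lin (ω t : ℝ) :
    HasDerivAt (fun x : ℝ => Real.sin (ω * x)) (Real.cos (ω * t) * ω) t :=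
  (Real.hasDerivAt_sin (ω*t)).comp t (hasDerivAt_lin ω t)

lemma hasDerivAt_gam5 {δ : ℝ} (hδ : 0 < δ) (t : ℝ) : HasDerivAt (gam5 δ) (gd1 δ t) t := by
  set ω := omg δ with hωdef
  set s := Real.sin (ω * t) with hs
  set c := Real.cos (ω * t) with hc
  have hω : 0 < ω := omg_pos hδ
  have hu_pos : 0 < s^2 + δ := by positivity
  have hv_pos : 0 < Real.sqrt (s^2 + δ) := Real.sqrt_pos.2 hu_pos
  set v := Real.sqrt (s^2+δ) with hvdef
  have hv2 : v^2 = s^2 + δ := Real.sq_sqrt hu_pos.le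
  have hS : HasDerivAt (fun x : ℝ => Real.sin (ω * x)) (c * ω) t := hasDerivAt_sin_lin ω t
  have hU : HasDerivAt (fun x : ℝ => (Real.sin (ω * x))^2 + δ)
      ((2:ℕ) * s^1 * (c * ω)) t := (hS.pow 2).add_const δ
  have hV : HasDerivAt (fun x : ℝ => Real.sqrt ((Real.sin (ω * x))^2 + δ))
      (((2:ℕ) * s^1 * (c * ω)) / (2 * v)) t := hU.sqrt hu_pos.ne'
  have hQ := hS.div hV hv_pos.ne'
  have hG := hQ.const_mul (Real.sqrt δ / ω)
  convert hG using 1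
  case e'_4 | e'_5 | e'_8 => rfl
  rw [gd1]
  simp only [← hωdef, ← hs, ← hc, ← hvdef]
  field_simp
  linear_combination (-2*c*s^2) * hv2

lemma deriv_gam5 {δ : ℝ} (hδ : 0 < δ) : deriv (gam5 δ) = gd1 δ :=
  funext fun t => (hasDerivAt_gam5 hδ t).deriv

lemma hasDerivAt_gd1 {δ : ℝ} (hδ : 0 < δ) (t : ℝ) : HasDerivAt (gd1 δ) (gd2 δ t) t := by
  set ω := omg δ with hωdef
  set s := Real.sin (ω * t) with hs
  set c := Real.cos (ω * t) with hc
  have hω : 0 < ω := omg_pos hδ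
  have hu_pos : 0 < s^2 + δ := by positivity
  have hv_pos : 0 < Real.sqrt (s^2 + δ) := Real.sqrt_pos.2 hu_pos
  set v := Real.sqrt (s^2+δ) with hvdef
  have hv2 : v^2 = s^2 + δ := Real.sq_sqrt hu_pos.le
  have hS : HasDerivAt (fun x : ℝ => Real.sin (ω * x)) (c * ω) t := hasDerivAt_sin_lin ω t
  have hC : HasDerivAt (fun x : ℝ => Real.cos (ω * x)) (-s * ω) t :=
    (Real.hasDerivAt_cos (ω*t)).comp t (hasDerivAt_lin ω t)
  have hU : HasDerivAt (fun x : ℝ => (Real.sin (ω * x))^2 + δ)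
      ((2:ℕ) * s^1 * (c * ω)) t := (hS.pow 2).add_const δ
  have hV : HasDerivAt (fun x : ℝ => Real.sqrt ((Real.sin (ω * x))^2 + δ))
      (((2:ℕ) * s^1 * (c * ω)) / (2 * v)) t := hU.sqrt hu_pos.ne'
  have hNum := hC.const_mul (δ * Real.sqrt δ)
  have hDen := hU.mul hV
  have hden_ne : ((Real.sin (ω * t))^2 + δ) * Real.sqrt ((Real.sin (ω * t))^2 + δ) ≠ 0 := by
    simp only [← hs, ← hvdef]; positivity
  have hQ := hNum.div hDen hden_ne
  convert hQ using 1
  case e'_4 | e'_5 | e'_8 => rfl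
  rw [gd2]
  simp only [Pi.mul_apply]
  simp only [← hωdef, ← hs, ← hc, ← hvdef]
  field_simp
  linear_combination (-2*s*c^2) * hv2

lemma contDiff_gam5 {δ : ℝ} (hδ : 0 < δ) : ContDiff ℝ (⊤ : ℕ∞) (gam5 δ) := by
  rw [contDiff_iff_contDiffAt]
  intro t
  have h1 : ContDiffAt ℝ (⊤ : ℕ∞) (fun x : ℝ => Real.sin (omg δ * x)) t :=
    (Real.contDiff_sin.comp (contDiff_const.mul contDiff_id)).contDiffAt
  have h2 : ContDiffAt ℝ (⊤ : ℕ∞) (fun x : ℝ => (Real.sin (omg δ * x))^2 + δ) t :=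
    (h1.pow 2).add contDiffAt_const
  have hne : (Real.sin (omg δ * t))^2 + δ ≠ 0 := by positivity
  have h3 : ContDiffAt ℝ (⊤ : ℕ∞) (fun x : ℝ => Real.sqrt ((Real.sin (omg δ * x))^2 + δ)) t :=
    h2.sqrt hne
  have hvne : Real.sqrt ((Real.sin (omg δ * t))^2 + δ) ≠ 0 := by positivity
  exact contDiffAt_const.mul (h1.div h3 hvne)

lemma even_iter_zero {f : ℝ → ℝ} {a : ℝ} (h : ∀ x, f (a + x) = -f (a - x)) (n : ℕ) :
    iteratedDeriv (2 * n) f a = 0 := by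
  have h2 : (fun x => f (a + (-x))) = fun x => -(f (a + x)) := by
    funext x
    have hx := h x
    have : f (a + -x) = f (a - x) := by ring_nf
    rw [this]
    linarith [hx]
  have h1 : iteratedDeriv (2*n) (fun x => f (a + (-x))) 0
      = (-1:ℝ)^(2*n) • iteratedDeriv (2*n) (fun x => f (a + x)) (-0) :=
    iteratedDeriv_comp_neg (2*n) (fun x => f (a + x)) 0
  have h3 : iteratedDeriv (2*n) (fun x => -(f (a + x))) 0
      = -(iteratedDeriv (2*n) (fun x => f (a + x)) 0) :=
    iteratedDeriv_neg (2*n) (fun x => f (a + x)) 0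
  have h4 : iteratedDeriv (2*n) (fun x => f (a + x)) 0 = iteratedDeriv (2*n) f a := by
    have := iteratedDeriv_comp_const_add (2*n) f a
    calc iteratedDeriv (2*n) (fun x => f (a + x)) 0
        = iteratedDeriv (2*n) f (a + 0) := by rw [this]
      _ = iteratedDeriv (2*n) f a := by rw [add_zero]
  have hpow : ((-1:ℝ))^(2*n) = 1 := by
    rw [pow_mul]; norm_num
  rw [h2, h3] at h1
  rw [hpow, neg_zero, one_smul] at h1
  rw [← h4]
  linarith [h1]

lemma gam5_odd0 {δ : ℝ} (x : ℝ) : gam5 δ (0 + x) = -gam5 δ (0 - x) := by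
  simp only [gam5, zero_add, zero_sub, mul_neg, Real.sin_neg]
  ring_nf

lemma gam5_oddL {δ : ℝ} (hδ : 0 < δ) (x : ℝ) :
    gam5 δ (π / omg δ + x) = -gam5 δ (π / omg δ - x) := by
  have hω : omg δ ≠ 0 := (omg_pos hδ).ne'
  have e1 : omg δ * (π / omg δ + x) = π + omg δ * x := by field_simp
  have e2 : omg δ * (π / omg δ - x) = π - omg δ * x := by field_simp
  simp only [gam5, e1, e2, Real.sin_pi_sub]
  have e3 : Real.sin (π + omg δ * x) = -Real.sin (omg δ * x) := by
    rw [Real.sin_add]; simp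
  rw [e3]
  ring_nf

noncomputable def Fad (δ : ℝ) (t : ℝ) : ℝ :=
  -(Real.sqrt δ / (omg δ)^2) * arcsin (Real.cos (omg δ * t) / Real.sqrt (1+δ))

lemma hasDerivAt_Fad {δ : ℝ} (hδ : 0 < δ) (t : ℝ) : HasDerivAt (Fad δ) (gam5 δ t) t := by
  set ω := omg δ with hωdef
  set s := Real.sin (ω * t) with hs
  set c := Real.cos (ω * t) with hc
  have hω : 0 < ω := omg_pos hδ
  set b := Real.sqrt (1+δ) with hbdef
  have hb1 : 1 < b := by
    nlinarith [Real.sq_sqrt (show (0:ℝ) ≤ 1+δ by linarith), Real.sqrt_nonneg (1+δ), hbdef]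
  have hb0 : 0 < b := by linarith
  have hb2 : b^2 = 1 + δ := Real.sq_sqrt (by linarith)
  have habs : |c / b| < 1 := by
    rw [abs_div, abs_of_pos hb0, div_lt_one hb0]
    calc |c| ≤ 1 := Real.abs_cos_le_one _
      _ < b := hb1
  have hx1 : c / b ≠ -1 := by
    intro h; rw [h] at habs; norm_num at habs
  have hx2 : c / b ≠ 1 := by
    intro h; rw [h] at habs; norm_num at habs
  have hC : HasDerivAt (fun x : ℝ => Real.cos (ω * x)) (-s * ω) t :=
    (Real.hasDerivAt_cos (ω*t)).comp t (hasDerivAt_lin ω t)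
  have hCb : HasDerivAt (fun x : ℝ => Real.cos (ω * x) / b) (-s * ω / b) t := hC.div_const b
  have harc := (Real.hasDerivAt_arcsin hx1 hx2).comp t hCb
  have hF := harc.const_mul (-(Real.sqrt δ / ω^2))
  convert hF using 1
  case e'_4 | e'_5 | e'_8 => rfl
  -- value identity
  have hu_pos : 0 < s^2 + δ := by positivity
  have hkey : Real.sqrt (1 - (c/b)^2) = Real.sqrt (s^2 + δ) / b := by
    have h1 : 1 - (c/b)^2 = (s^2 + δ) / b^2 := by
      have hsc : s^2 + c^2 = 1 := Real.sin_sq_add_cos_sq (ω*t)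
      field_simp
      linarith [hsc]
    rw [h1, Real.sqrt_div hu_pos.le, Real.sqrt_sq hb0.le]
  rw [gam5]
  simp only [← hωdef, ← hs, ← hc, Function.comp_def, ← hbdef, hkey]
  have hv_pos : 0 < Real.sqrt (s^2 + δ) := Real.sqrt_pos.2 hu_pos
  field_simp

lemma intervalIntegrable_gam5 {δ : ℝ} (hδ : 0 < δ) (a b : ℝ) :
    IntervalIntegrable (gam5 δ) MeasureTheory.volume a b :=
  ((contDiff_gam5 hδ).continuous).intervalIntegrable a b

lemma integral_gam5 {δ : ℝ} (hδ : 0 < δ) (t : ℝ) :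
    (∫ x in (0:ℝ)..t, gam5 δ x) = Fad δ t - Fad δ 0 :=
  intervalIntegral.integral_eq_sub_of_hasDerivAt
    (fun x _ => hasDerivAt_Fad hδ x) (intervalIntegrable_gam5 hδ 0 t)

lemma Fad_zero {δ : ℝ} (hδ : 0 < δ) : Fad δ 0 = -1 := by
  have hθ : 0 < thA δ := thA_pos hδ
  have hsd : 0 < Real.sqrt δ := Real.sqrt_pos.2 hδ
  rw [Fad, omg_sq hδ]
  simp only [mul_zero, Real.cos_zero]
  rw [show (1 : ℝ) / Real.sqrt (1+δ) = 1 / Real.sqrt (1+δ) from rfl]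
  have : arcsin (1 / Real.sqrt (1+δ)) = thA δ := rfl
  rw [this]
  field_simp

lemma Fad_ell {δ : ℝ} (hδ : 0 < δ) : Fad δ (π / omg δ) = 1 := by
  have hω : 0 < omg δ := omg_pos hδ
  have hθ : 0 < thA δ := thA_pos hδ
  have hsd : 0 < Real.sqrt δ := Real.sqrt_pos.2 hδ
  rw [Fad, show omg δ * (π/omg δ) = π by field_simp, Real.cos_pi, omg_sq hδ,
    show (-1:ℝ)/Real.sqrt (1+δ) = -(1/Real.sqrt (1+δ)) by ring, Real.arcsin_neg]
  have h : arcsin (1/Real.sqrt (1+δ)) = thA δ := rfl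
  rw [h]
  field_simp

lemma arcsin_ge_self {x : ℝ} (h0 : 0 ≤ x) (h1 : x ≤ 1) : x ≤ arcsin x := by
  have h2 : Real.sin (arcsin x) = x := Real.sin_arcsin (by linarith) h1
  have h3 : 0 ≤ arcsin x := Real.arcsin_nonneg.2 h0
  nlinarith [Real.sin_le h3]



/-- For every `C > 0` there is a normalized, concave (i.e. convex surface)
profile function `γ` of some length `ℓ > 0` and a point `t₀ ∈ (0,ℓ)` with
`|Γ t₀ + γ' t₀| > C * γ t₀`, i.e. `m_γ > C`. -/
theorem stmt_5 (C : ℝ) (hC : 0 < C) :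
    ∃ ℓ : ℝ, ∃ γ : ℝ → ℝ, 0 < ℓ ∧ IsProfileFunction ℓ γ ∧ IsNormalizedProfile ℓ γ ∧
      (∀ t ∈ Set.Icc 0 ℓ, deriv (deriv γ) t ≤ 0) ∧
      ∃ t₀ ∈ Set.Ioo 0 ℓ, C * γ t₀ < |Gam γ t₀ + deriv γ t₀| := by
  have h20 : (0:ℝ) < 20*C+1 := by linarith
  set e : ℝ := 1/(20*C+1) with hedef
  have he : 0 < e := by positivity
  set δ : ℝ := min (1/100) (e^4) with hδdef
  have hδ : 0 < δ := lt_min (by norm_num) (by positivity)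
  have hδ100 : δ ≤ 1/100 := min_le_left _ _
  have hδ1 : δ ≤ 1 := by linarith
  have hδC : δ ≤ e^4 := min_le_right _ _
  have hee : e * (20*C+1) = 1 := by rw [hedef]; field_simp
  clear hδdef hedef
  clear_value δ e
  have hω : 0 < omg δ := omg_pos hδ
  set ω := omg δ with hωdef
  have hθ : 0 < thA δ := thA_pos hδ
  have hθle : thA δ ≤ π/2 := Real.arcsin_le_pi_div_two _
  have hsd : 0 < Real.sqrt δ := Real.sqrt_pos.2 hδ
  have hω2 : ω^2 = Real.sqrt δ * thA δ := omg_sq hδ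
  have hπ : 0 < π := Real.pi_pos
  have hπlt : π < 3.15 := Real.pi_lt_d2
  have hb0 : 0 < Real.sqrt (1+δ) := Real.sqrt_pos.2 (by linarith)
  have hble : Real.sqrt (1+δ) ≤ 3/2 := by
    nlinarith [Real.sq_sqrt (show (0:ℝ) ≤ 1+δ by linarith)]
  have hθge : 2/3 ≤ thA δ := by
    have h1 : (2:ℝ)/3 ≤ 1/Real.sqrt (1+δ) := by
      rw [le_div_iff₀ hb0]; linarith
    have h2 : 1/Real.sqrt (1+δ) ≤ 1 := by
      rw [div_le_one hb0]
      nlinarith [Real.sq_sqrt (show (0:ℝ) ≤ 1+δ by linarith)]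
    calc (2:ℝ)/3 ≤ 1/Real.sqrt (1+δ) := h1
      _ ≤ arcsin (1/Real.sqrt (1+δ)) := arcsin_ge_self (by positivity) h2
      _ = thA δ := rfl
  have hsin3 : Real.sin (π/3) = Real.sqrt 3 / 2 := Real.sin_pi_div_three
  have hcos3 : Real.cos (π/3) = 1/2 := Real.cos_pi_div_three
  have hs3sq : (Real.sqrt 3 / 2)^2 = 3/4 := by
    rw [div_pow, Real.sq_sqrt (by norm_num : (0:ℝ) ≤ 3)]; norm_num
  refine ⟨π/ω, gam5 δ, by positivity, ?_, ?_, ?_, ?_⟩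
  · constructor
    · positivity
    · exact contDiff_gam5 hδ
    · simp [gam5]
    · rw [gam5, show ω * (π/ω) = π by field_simp]
      simp [Real.sin_pi]
    · intro t ht
      have h1 : 0 < ω * t := mul_pos hω ht.1
      have h2 : ω * t < π := by
        have h3 : t * ω < π := (lt_div_iff₀ hω).1 ht.2
        linarith [mul_comm ω t]
      have hsin : 0 < Real.sin (ω * t) := Real.sin_pos_of_pos_of_lt_pi h1 h2
      rw [gam5]
      have hden : 0 < Real.sqrt ((Real.sin (ω*t))^2 + δ) := Real.sqrt_pos.2 (by positivity)
      positivity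
    · rw [deriv_gam5 hδ, gd1]
      simp only [mul_zero, Real.sin_zero, Real.cos_zero]
      rw [show (0:ℝ)^2 + δ = δ by ring]
      field_simp
    · rw [deriv_gam5 hδ, gd1, show omg δ * (π/ω) = π by rw [← hωdef]; field_simp]
      simp only [Real.sin_pi, Real.cos_pi]
      rw [show (0:ℝ)^2 + δ = δ by ring]
      field_simp
    · intro t ht
      rw [deriv_gam5 hδ, gd1]
      have h1 : 0 < ω * t := mul_pos hω ht.1
      have h2 : ω * t < π := by
        have h3 : t * ω < π := (lt_div_iff₀ hω).1 ht.2
        linarith [mul_comm ω t]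
      have hsin : 0 < Real.sin (ω * t) := Real.sin_pos_of_pos_of_lt_pi h1 h2
      set s := Real.sin (ω*t) with hs
      set c := Real.cos (ω*t) with hcdef
      have hu : 0 < s^2 + δ := by positivity
      have hv : 0 < Real.sqrt (s^2+δ) := Real.sqrt_pos.2 hu
      have hscsq : s^2 + c^2 = 1 := Real.sin_sq_add_cos_sq (ω*t)
      have habsc : |c| < 1 := by
        rw [← sq_lt_one_iff_abs_lt_one]
        nlinarith
      rw [abs_div]
      rw [div_lt_one (by rw [abs_of_pos (mul_pos hu hv)]; exact mul_pos hu hv)]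
      have h4 : |δ * Real.sqrt δ * c| = δ * Real.sqrt δ * |c| := by
        rw [abs_mul, abs_of_pos (mul_pos hδ hsd)]
      rw [h4, abs_of_pos (mul_pos hu hv)]
      have h5 : δ * Real.sqrt δ * |c| < δ * Real.sqrt δ * 1 :=
        mul_lt_mul_of_pos_left habsc (mul_pos hδ hsd)
      have h6 : δ * Real.sqrt δ ≤ (s^2+δ) * Real.sqrt (s^2+δ) := by
        apply mul_le_mul (by nlinarith) (Real.sqrt_le_sqrt (by nlinarith)) hsd.le hu.le
      linarith
    · exact fun n => even_iter_zero (fun x => gam5_odd0 x) n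
    · exact fun n => even_iter_zero (fun x => gam5_oddL hδ x) n
  · show (∫ t in (0:ℝ)..(π/ω), gam5 δ t) = 2
    rw [integral_gam5 hδ]
    rw [show (π/ω) = π/omg δ from rfl, Fad_ell hδ, Fad_zero hδ]
    norm_num
  · intro t ht
    rw [deriv_gam5 hδ, (hasDerivAt_gd1 hδ t).deriv, gd2]
    have h1 : 0 ≤ ω * t := mul_nonneg hω.le ht.1
    have h2 : ω * t ≤ π := by
      have h3 : t * ω ≤ π := (le_div_iff₀ hω).1 ht.2
      linarith [mul_comm ω t]
    have hsin : 0 ≤ Real.sin (ω * t) := Real.sin_nonneg_of_nonneg_of_le_pi h1 h2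
    apply div_nonpos_of_nonpos_of_nonneg
    · apply neg_nonpos_of_nonneg
      have h7 := sq_nonneg (Real.cos (ω*t))
      have h8 := sq_nonneg (Real.sin (ω*t))
      positivity
    · positivity
  · refine ⟨π/(3*ω), ⟨by positivity, ?_⟩, ?_⟩
    · apply div_lt_div_of_pos_left hπ hω
      linarith
    · have hωt : omg δ * (π/(3*ω)) = π/3 := by rw [← hωdef]; field_simp
      have hu34 : (0:ℝ) < 3/4 + δ := by linarith
      have hv34 : 0 < Real.sqrt (3/4 + δ) := Real.sqrt_pos.2 hu34
      have hgam : gam5 δ (π/(3*ω)) = (Real.sqrt δ/ω) * ((Real.sqrt 3/2) / Real.sqrt (3/4 + δ)) := by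
        rw [gam5, hωt, hsin3, hs3sq]
      have hgd1 : deriv (gam5 δ) (π/(3*ω))
          = δ * Real.sqrt δ * (1/2) / ((3/4+δ) * Real.sqrt (3/4+δ)) := by
        rw [deriv_gam5 hδ, gd1, hωt, hsin3, hcos3, hs3sq]
      have hGam : Gam (gam5 δ) (π/(3*ω)) = -(arcsin ((1/2) / Real.sqrt (1+δ)) / thA δ) := by
        rw [Gam, integral_gam5 hδ, Fad_zero hδ, Fad, hωt, hcos3, hω2]
        have hne : thA δ ≠ 0 := hθ.ne'
        field_simp
        ring
      have hb1 : (1:ℝ)/3 ≤ (1/2) / Real.sqrt (1+δ) := by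
        rw [le_div_iff₀ hb0]; linarith
      have hb2 : (1/2) / Real.sqrt (1+δ) ≤ 1 := by
        rw [div_le_one hb0]
        nlinarith [Real.sq_sqrt (show (0:ℝ) ≤ 1+δ by linarith)]
      have harc : 1/3 ≤ arcsin ((1/2) / Real.sqrt (1+δ)) :=
        le_trans hb1 (arcsin_ge_self (by positivity) hb2)
      have hGamle : Gam (gam5 δ) (π/(3*ω)) ≤ -(1/5) := by
        rw [hGam]
        have h1 : (1/5 : ℝ) ≤ arcsin ((1/2) / Real.sqrt (1+δ)) / thA δ := by
          rw [le_div_iff₀ hθ]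
          nlinarith
        linarith
      have hsdle : Real.sqrt δ ≤ 1/10 := by
        have h1 : Real.sqrt δ ≤ Real.sqrt (1/100) := Real.sqrt_le_sqrt hδ100
        have h2 : Real.sqrt (1/100 : ℝ) = 1/10 := by
          rw [show (1/100:ℝ) = (1/10)^2 by norm_num,
            Real.sqrt_sq (by norm_num : (0:ℝ) ≤ 1/10)]
        linarith
      have hv34ge : 1/2 ≤ Real.sqrt (3/4+δ) := by
        nlinarith [Real.sq_sqrt hu34.le, hv34]
      have hDle : deriv (gam5 δ) (π/(3*ω)) ≤ 1/10 := by
        rw [hgd1, div_le_iff₀ (by positivity)]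
        nlinarith [mul_le_mul hδ100 hsdle hsd.le (by norm_num : (0:ℝ) ≤ 1/100), hv34ge, hu34]
      have hDge : 0 ≤ deriv (gam5 δ) (π/(3*ω)) := by
        rw [hgd1]; positivity
      have habs : 1/10 ≤ |Gam (gam5 δ) (π/(3*ω)) + deriv (gam5 δ) (π/(3*ω))| := by
        calc (1/10 : ℝ) ≤ -(Gam (gam5 δ) (π/(3*ω)) + deriv (gam5 δ) (π/(3*ω))) := by linarith
          _ ≤ |Gam (gam5 δ) (π/(3*ω)) + deriv (gam5 δ) (π/(3*ω))| := neg_le_abs _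
      have hq1 : (Real.sqrt 3/2) / Real.sqrt (3/4+δ) ≤ 1 := by
        rw [div_le_one hv34]
        nlinarith [Real.sq_sqrt (show (0:ℝ) ≤ 3 by norm_num), Real.sqrt_nonneg 3,
          Real.sq_sqrt hu34.le, hv34]
      have hss : Real.sqrt δ * Real.sqrt δ = δ := Real.mul_self_sqrt hδ.le
      have hr2 : (Real.sqrt δ/ω)^2 = Real.sqrt δ / thA δ := by
        rw [div_pow, hω2, Real.sq_sqrt hδ.le]
        rw [div_eq_div_iff (by positivity) hθ.ne']
        linear_combination (-(thA δ)) * hss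
      have hsde : Real.sqrt δ ≤ e^2 := by
        have h1 : Real.sqrt δ ≤ Real.sqrt (e^4) := Real.sqrt_le_sqrt hδC
        have h2 : Real.sqrt (e^4) = e^2 := by
          rw [show e^4 = (e^2)^2 by ring, Real.sqrt_sq (by positivity)]
        linarith
      have hr2le : (Real.sqrt δ/ω)^2 ≤ (3/2)*e^2 := by
        rw [hr2, div_le_iff₀ hθ]
        nlinarith [mul_le_mul_of_nonneg_left hθge (by positivity : (0:ℝ) ≤ (3/2)*e^2)]
      have hrle : Real.sqrt δ/ω ≤ (13/10)*e := by
        by_contra hcon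
        push_neg at hcon
        have h1 : ((13/10)*e)^2 < (Real.sqrt δ/ω)^2 :=
          pow_lt_pow_left₀ hcon (by positivity) (by norm_num)
        have h2 : ((13/10)*e)^2 = (169/100)*e^2 := by ring
        have h3 : 0 < e^2 := by positivity
        linarith
      have hγle : gam5 δ (π/(3*ω)) ≤ (13/10)*e := by
        rw [hgam]
        calc (Real.sqrt δ/ω) * ((Real.sqrt 3/2) / Real.sqrt (3/4+δ))
            ≤ (Real.sqrt δ/ω) * 1 :=
              mul_le_mul_of_nonneg_left hq1 (by positivity)
          _ = Real.sqrt δ/ω := mul_one _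
          _ ≤ (13/10)*e := hrle
      have hCγ : C * gam5 δ (π/(3*ω)) < 1/10 := by
        have h1 : C * gam5 δ (π/(3*ω)) ≤ C * ((13/10)*e) :=
          mul_le_mul_of_nonneg_left hγle hC.le
        have h2 : C * ((13/10)*e) = (13/10)*(C*e) := by ring
        have h3 : 0 < C*e := mul_pos hC he
        linarith
      linarith
end

section
/- Let γ be a profile function of length ℓ and let m > 0. Assume the magnetic curvature is positive, i.e., m²·(−γ''(t)/γ(t)) + 1 > 0 for every t ∈ (0,ℓ). Then: (a) there is exactly one t⁺ ∈ (0,ℓ) with m·γ'(t⁺) = γ(t⁺), and the function Î⁺(t) = m·γ(t) − Γ(t) attains its maximum over [0,ℓ] exactly at t⁺; (b) there is exactly one t⁻ ∈ (0,ℓ) with −m·γ'(t⁻) = γ(t⁻), and the function Î⁻(t) = −m·γ(t) − Γ(t) attains its minimum over [0,ℓ] exactly at t⁻. -/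
section StmtSeven

open Set Filter Topology

lemma sign_change_unique {ℓ : ℝ} (hℓ : 0 < ℓ) {f : ℝ → ℝ} (hf : Continuous f)
    (h0 : 0 < f 0) (hl : f ℓ < 0)
    (hz : ∀ t ∈ Set.Ioo 0 ℓ, f t = 0 → ∃ d, d < 0 ∧ HasDerivAt f d t) :
    ∃ t₀ ∈ Set.Ioo 0 ℓ, (∀ t ∈ Set.Ico 0 t₀, 0 < f t) ∧ f t₀ = 0 ∧
      ∀ t ∈ Set.Ioc t₀ ℓ, f t < 0 := by
  set S : Set ℝ := Set.Icc 0 ℓ ∩ {t | f t ≤ 0} with hS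
  have hSne : S.Nonempty := ⟨ℓ, ⟨hℓ.le, le_refl ℓ⟩, hl.le⟩
  have hSbdd : BddBelow S := ⟨0, fun t ht => ht.1.1⟩
  have hSclosed : IsClosed S := isClosed_Icc.inter (isClosed_le hf continuous_const)
  set t₀ := sInf S with ht₀def
  have ht₀S : t₀ ∈ S := hSclosed.csInf_mem hSne hSbdd
  have hpos : ∀ t ∈ Set.Ico 0 t₀, 0 < f t := by
    intro t ht
    by_contra h
    push_neg at h
    have hmem : t ∈ S := ⟨⟨ht.1, ht.2.le.trans ht₀S.1.2⟩, h⟩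
    exact absurd (csInf_le hSbdd hmem) (not_le.mpr ht.2)
  have ht₀pos : 0 < t₀ := by
    rcases eq_or_lt_of_le ht₀S.1.1 with h | h
    · exact absurd (h ▸ ht₀S.2) (not_le.mpr h0)
    · exact h
  have hf0 : f t₀ = 0 := by
    refine le_antisymm ht₀S.2 ?_
    have h1 : Tendsto f (𝓝[<] t₀) (𝓝 (f t₀)) := (hf.tendsto t₀).mono_left nhdsWithin_le_nhds
    refine ge_of_tendsto h1 ?_
    filter_upwards [Ioo_mem_nhdsLT_of_mem (⟨ht₀pos, le_refl t₀⟩ : t₀ ∈ Set.Ioc 0 t₀)] with t ht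
    exact (hpos t ⟨ht.1.le, ht.2⟩).le
  have ht₀lt : t₀ < ℓ := by
    rcases eq_or_lt_of_le ht₀S.1.2 with h | h
    · rw [h] at hf0; linarith
    · exact h
  obtain ⟨d, hd, hder⟩ := hz t₀ ⟨ht₀pos, ht₀lt⟩ hf0
  have hslope : Tendsto (slope f t₀) (𝓝[>] t₀) (𝓝 d) :=
    (hasDerivAt_iff_tendsto_slope.mp hder).mono_left
      (nhdsWithin_mono _ (fun x hx => ne_of_gt hx))
  have hev : ∀ᶠ t in 𝓝[>] t₀, f t < 0 := by
    filter_upwards [hslope.eventually (gt_mem_nhds hd), self_mem_nhdsWithin] with t hts htt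
    have ht' : (0:ℝ) < t - t₀ := sub_pos.mpr htt
    rw [slope_def_field, hf0, sub_zero] at hts
    by_contra hc
    push_neg at hc
    exact absurd hts (not_lt.mpr (div_nonneg hc ht'.le))
  obtain ⟨c', hc', hsub⟩ := mem_nhdsGT_iff_exists_Ioo_subset.mp hev
  have hc'gt : t₀ < c' := hc'
  refine ⟨t₀, ⟨ht₀pos, ht₀lt⟩, hpos, hf0, ?_⟩
  by_contra h
  push_neg at h
  obtain ⟨t₂, ht₂, hft₂⟩ := h
  have ht₂c' : c' ≤ t₂ := by
    by_contra hcc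
    push_neg at hcc
    exact absurd (hsub ⟨ht₂.1, hcc⟩) (not_lt.mpr hft₂)
  set c := (t₀ + c') / 2 with hc
  have hcIoo : c ∈ Set.Ioo t₀ c' := ⟨by simp [hc]; linarith, by simp [hc]; linarith⟩
  have hfc : f c < 0 := hsub hcIoo
  set A : Set ℝ := Set.Icc c ℓ ∩ {t | 0 ≤ f t} with hA
  have hAne : A.Nonempty := ⟨t₂, ⟨le_trans hcIoo.2.le ht₂c', ht₂.2⟩, hft₂⟩
  have hAbdd : BddBelow A := ⟨c, fun t ht => ht.1.1⟩
  have hAclosed : IsClosed A := isClosed_Icc.inter (isClosed_le continuous_const hf)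
  set t₁ := sInf A with ht₁def
  have ht₁A : t₁ ∈ A := hAclosed.csInf_mem hAne hAbdd
  have hneg : ∀ t ∈ Set.Ico c t₁, f t < 0 := by
    intro t ht
    by_contra hcc
    push_neg at hcc
    have : t ∈ A := ⟨⟨ht.1, ht.2.le.trans ht₁A.1.2⟩, hcc⟩
    exact absurd (csInf_le hAbdd this) (not_le.mpr ht.2)
  have hct₁ : c < t₁ := by
    rcases eq_or_lt_of_le ht₁A.1.1 with h | h
    · rw [← h] at ht₁A; exact absurd ht₁A.2 (not_le.mpr hfc)
    · exact h
  have hf1 : f t₁ = 0 := by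
    refine le_antisymm ?_ ht₁A.2
    have h1 : Tendsto f (𝓝[<] t₁) (𝓝 (f t₁)) := (hf.tendsto t₁).mono_left nhdsWithin_le_nhds
    refine le_of_tendsto h1 ?_
    filter_upwards [Ioo_mem_nhdsLT_of_mem (⟨hct₁, le_refl t₁⟩ : t₁ ∈ Set.Ioc c t₁)] with t ht
    exact (hneg t ⟨ht.1.le, ht.2⟩).le
  have ht₁lt : t₁ < ℓ := by
    rcases eq_or_lt_of_le ht₁A.1.2 with h | h
    · rw [h] at hf1; linarith
    · exact h
  have ht₁Ioo : t₁ ∈ Set.Ioo 0 ℓ := ⟨lt_trans (lt_trans ht₀pos hcIoo.1) hct₁, ht₁lt⟩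
  obtain ⟨d₁, hd₁, hder₁⟩ := hz t₁ ht₁Ioo hf1
  have hslope₁ : Tendsto (slope f t₁) (𝓝[<] t₁) (𝓝 d₁) :=
    (hasDerivAt_iff_tendsto_slope.mp hder₁).mono_left
      (nhdsWithin_mono _ (fun x hx => ne_of_lt hx))
  have : 0 ≤ d₁ := by
    refine ge_of_tendsto hslope₁ ?_
    filter_upwards [Ioo_mem_nhdsLT_of_mem (⟨hct₁, le_refl t₁⟩ : t₁ ∈ Set.Ioc c t₁)] with t ht
    rw [slope_def_field, hf1, sub_zero]
    have h1 : f t < 0 := hneg t ⟨ht.1.le, ht.2⟩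
    have h2 : t - t₁ < 0 := sub_neg.mpr ht.2
    exact (div_pos_of_neg_of_neg h1 h2).le
  linarith


lemma profile_aux (ℓ m ε : ℝ) (γ : ℝ → ℝ)
    (hℓ : 0 < ℓ) (hsm : ContDiff ℝ (⊤ : ℕ∞) γ)
    (h0γ : γ 0 = 0) (hℓγ : γ ℓ = 0)
    (hposγ : ∀ t ∈ Set.Ioo 0 ℓ, 0 < γ t)
    (hd0 : deriv γ 0 = 1) (hdℓ : deriv γ ℓ = -1)
    (hm : 0 < m) (hε : ε = 1 ∨ ε = -1)
    (hK : ∀ t ∈ Set.Ioo 0 ℓ, 0 < m ^ 2 * (-(deriv (deriv γ) t) / γ t) + 1) :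
    ∃ t₀ ∈ Set.Ioo 0 ℓ, m * deriv γ t₀ = ε * γ t₀ ∧
      (∀ t ∈ Set.Ioo 0 ℓ, m * deriv γ t = ε * γ t → t = t₀) ∧
      (∀ t ∈ Set.Icc 0 ℓ, t ≠ t₀ →
        m * γ t - ε * Gam γ t < m * γ t₀ - ε * Gam γ t₀) := by
  have hε2 : ε ^ 2 = 1 := by rcases hε with h | h <;> rw [h] <;> norm_num
  have hγc : Continuous γ := hsm.continuous
  have hdsm : ContDiff ℝ (⊤ : ℕ∞) (deriv γ) := (contDiff_infty_iff_deriv.mp hsm).2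
  have hγ'c : Continuous (deriv γ) := hdsm.continuous
  set G : ℝ → ℝ := fun t => m * deriv γ t - ε * γ t with hGdef
  have hGc : Continuous G := (continuous_const.mul hγ'c).sub (continuous_const.mul hγc)
  have hG0 : 0 < G 0 := by simp [hGdef, hd0, h0γ]; linarith
  have hGℓ : G ℓ < 0 := by simp [hGdef, hdℓ, hℓγ]; linarith
  have hz : ∀ t ∈ Set.Ioo 0 ℓ, G t = 0 → ∃ d, d < 0 ∧ HasDerivAt G d t := by
    intro t ht hGt
    have hg : 0 < γ t := hposγ t ht
    set D := deriv (deriv γ) t with hD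
    have hdd : HasDerivAt (deriv γ) D t :=
      ((hdsm.differentiable (by simp)) t).hasDerivAt
    have hdg : HasDerivAt γ (deriv γ t) t := ((hsm.differentiable (by simp)) t).hasDerivAt
    have hder : HasDerivAt G (m * D - ε * deriv γ t) t :=
      (hdd.const_mul m).sub (hdg.const_mul ε)
    refine ⟨_, ?_, hder⟩
    have hzero : m * deriv γ t = ε * γ t := by
      have := hGt; simp [hGdef] at this; linarith
    have hKt := hK t ht
    have h2 : -1 * γ t < m ^ 2 * (-D) := by
      have h3 : (-1 : ℝ) < m ^ 2 * (-D) / γ t := by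
        rw [mul_div_assoc]; linarith
      exact (lt_div_iff₀ hg).mp h3
    -- so m^2 * D < γ t
    have h4 : m ^ 2 * D < γ t := by nlinarith
    -- d = m D - ε * deriv γ t;  m * (ε * deriv γ t) = ε^2 * γ t = γ t
    have h5 : m * (ε * deriv γ t) = γ t := by linear_combination ε * hzero + γ t * hε2
    have h6 : m * (m * D - ε * deriv γ t) = m ^ 2 * D - γ t := by linear_combination -h5
    nlinarith [h4, h6, hm]
  obtain ⟨t₀, ht₀, hposG, hG0', hnegG⟩ := sign_change_unique hℓ hGc hG0 hGℓ hz
  have hzero₀ : m * deriv γ t₀ = ε * γ t₀ := by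
    have := hG0'; simp [hGdef] at this; linarith
  have huniq : ∀ t ∈ Set.Ioo 0 ℓ, m * deriv γ t = ε * γ t → t = t₀ := by
    intro t ht hzt
    have hGt : G t = 0 := by simp [hGdef]; linarith
    rcases lt_trichotomy t t₀ with h | h | h
    · exact absurd hGt (ne_of_gt (hposG t ⟨ht.1.le, h⟩))
    · exact h
    · exact absurd hGt (ne_of_lt (hnegG t ⟨h, ht.2.le⟩))
  have hGam : ∀ t : ℝ, HasDerivAt (Gam γ) (γ t) t := by
    intro t
    have h1 : HasDerivAt (fun u => ∫ s in (0:ℝ)..u, γ s) (γ t) t :=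
      intervalIntegral.integral_hasDerivAt_right (hγc.intervalIntegrable 0 t)
        (hγc.stronglyMeasurableAtFilter _ _) hγc.continuousAt
    exact h1.const_add (-1)
  set H : ℝ → ℝ := fun t => m * γ t - ε * Gam γ t with hHdef
  have hH : ∀ t : ℝ, HasDerivAt H (G t) t := by
    intro t
    have hdg : HasDerivAt γ (deriv γ t) t := ((hsm.differentiable (by simp)) t).hasDerivAt
    exact (hdg.const_mul m).sub ((hGam t).const_mul ε)
  have hHc : Continuous H := by
    have : Differentiable ℝ H := fun t => (hH t).differentiableAt
    exact this.continuous
  have hmono : StrictMonoOn H (Set.Icc 0 t₀) := by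
    apply strictMonoOn_of_deriv_pos (convex_Icc 0 t₀) hHc.continuousOn
    intro x hx
    rw [interior_Icc] at hx
    rw [(hH x).deriv]
    exact hposG x ⟨hx.1.le, hx.2⟩
  have hanti : StrictAntiOn H (Set.Icc t₀ ℓ) := by
    apply strictAntiOn_of_deriv_neg (convex_Icc t₀ ℓ) hHc.continuousOn
    intro x hx
    rw [interior_Icc] at hx
    rw [(hH x).deriv]
    exact hnegG x ⟨hx.1, hx.2.le⟩
  refine ⟨t₀, ht₀, hzero₀, huniq, ?_⟩
  intro t ht hne
  rcases lt_or_gt_of_ne hne with h | h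
  · exact hmono ⟨ht.1, h.le⟩ ⟨ht₀.1.le, le_refl t₀⟩ h
  · exact hanti ⟨le_refl t₀, ht₀.2.le⟩ ⟨le_of_lt h, ht.2⟩ h

/-- For a profile function with positive magnetic curvature
`m² (−γ''/γ) + 1 > 0` on `(0,ℓ)`: (a) there is exactly one `t⁺ ∈ (0,ℓ)` with
`m γ' t⁺ = γ t⁺`, and `Î⁺(t) = m γ t − Γ t` attains its maximum over `[0,ℓ]`
exactly at `t⁺`; (b) there is exactly one `t⁻ ∈ (0,ℓ)` with `−m γ' t⁻ = γ t⁻`,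
and `Î⁻(t) = −m γ t − Γ t` attains its minimum over `[0,ℓ]` exactly at `t⁻`. -/
theorem stmt_7 (ℓ m : ℝ) (γ : ℝ → ℝ) (hγ : IsProfileFunction ℓ γ) (hm : 0 < m)
    (hK : ∀ t ∈ Set.Ioo 0 ℓ, 0 < m ^ 2 * (-(deriv (deriv γ) t) / γ t) + 1) :
    ((∃! t : ℝ, t ∈ Set.Ioo 0 ℓ ∧ m * deriv γ t = γ t) ∧
      (∀ tp ∈ Set.Ioo 0 ℓ, m * deriv γ tp = γ tp →
        ∀ t ∈ Set.Icc 0 ℓ, t ≠ tp →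
          m * γ t - Gam γ t < m * γ tp - Gam γ tp)) ∧
    ((∃! t : ℝ, t ∈ Set.Ioo 0 ℓ ∧ -(m * deriv γ t) = γ t) ∧
      (∀ tm ∈ Set.Ioo 0 ℓ, -(m * deriv γ tm) = γ tm →
        ∀ t ∈ Set.Icc 0 ℓ, t ≠ tm →
          -(m * γ tm) - Gam γ tm < -(m * γ t) - Gam γ t)) := by
  obtain ⟨hℓ, hsm, h0γ, hℓγ, hposγ, hd0, hdℓ, _, _, _⟩ := hγ
  constructor
  · obtain ⟨t₀, ht₀, hz₀, huniq, hmax⟩ :=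
      profile_aux ℓ m 1 γ hℓ hsm h0γ hℓγ hposγ hd0 hdℓ hm (Or.inl rfl) hK
    constructor
    · exact ⟨t₀, ⟨ht₀, by linarith⟩, fun y hy => huniq y hy.1 (by linarith [hy.2])⟩
    · intro tp htp hztp t ht hne
      have heq : tp = t₀ := huniq tp htp (by linarith)
      subst heq
      have := hmax t ht hne
      linarith
  · obtain ⟨t₀, ht₀, hz₀, huniq, hmax⟩ :=
      profile_aux ℓ m (-1) γ hℓ hsm h0γ hℓγ hposγ hd0 hdℓ hm (Or.inr rfl) hK
    constructor
    · exact ⟨t₀, ⟨ht₀, by linarith⟩, fun y hy => huniq y hy.1 (by linarith [hy.2])⟩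
    · intro tm htm hztm t ht hne
      have heq : tm = t₀ := huniq tm htm (by linarith)
      subst heq
      have := hmax t ht hne
      linarith

end StmtSeven
end

section
/- For every ε ∈ (0,1) and every δ ∈ (0, π/2) there exist ℓ > δ and a normalized profile function γ of length ℓ such that γ'(δ) < −ε. -/
set_option maxHeartbeats 1000000

/-! ### Auxiliary construction

We construct the profile as `γ(t) = sin t * (1 + sin² t * (W (cos t) - κ))` where
`W` is a steep arctan-sigmoid located at `x₀ = cos δ`, and `κ` is a normalization
constant. -/

noncomputable def profW (η k x₀ x : ℝ) : ℝ := η * (1/2 + Real.arctan (k * (x - x₀)) / Real.pi)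

noncomputable def profWd (η k x₀ x : ℝ) : ℝ := η * k / (Real.pi * (1 + (k * (x - x₀))^2))

noncomputable def prof (η k x₀ κ t : ℝ) : ℝ :=
  Real.sin t * (1 + Real.sin t ^ 2 * (profW η k x₀ (Real.cos t) - κ))

noncomputable def profP (η k x₀ κ x : ℝ) : ℝ :=
  x + 3*x*(1-x^2)*(profW η k x₀ x - κ) - (1-x^2)^2 * profWd η k x₀ x

lemma profW_hasDerivAt (η k x₀ x : ℝ) :
    HasDerivAt (profW η k x₀) (profWd η k x₀ x) x := by
  have h1 : HasDerivAt (fun x : ℝ => k * (x - x₀)) k x := by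
    simpa using ((hasDerivAt_id x).sub_const x₀).const_mul k
  have h2 := (Real.hasDerivAt_arctan (k * (x - x₀))).comp x h1
  have h3 : HasDerivAt (fun x : ℝ => η * (1/2 + Real.arctan (k * (x - x₀)) / Real.pi))
      (η * ((1 / (1 + (k * (x - x₀)) ^ 2) * k) / Real.pi)) x := by
    exact (((h2.div_const Real.pi).const_add (1/2)).const_mul η)
  refine h3.congr_deriv (Eq.symm ?_)
  unfold profWd
  have hpi := Real.pi_ne_zero
  have hden : (1 : ℝ) + (k * (x - x₀)) ^ 2 ≠ 0 := by positivity
  field_simp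

lemma profW_contDiff (η k x₀ : ℝ) : ContDiff ℝ (⊤ : ℕ∞) (profW η k x₀) := by
  unfold profW
  exact contDiff_const.mul (contDiff_const.add
    ((Real.contDiff_arctan.comp (contDiff_const.mul (contDiff_id.sub contDiff_const))).div_const _))

lemma prof_contDiff (η k x₀ κ : ℝ) : ContDiff ℝ (⊤ : ℕ∞) (prof η k x₀ κ) := by
  unfold prof
  exact Real.contDiff_sin.mul (contDiff_const.add ((Real.contDiff_sin.pow 2).mul
    (((profW_contDiff η k x₀).comp Real.contDiff_cos).sub contDiff_const)))

lemma prof_hasDerivAt (η k x₀ κ t : ℝ) :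
    HasDerivAt (prof η k x₀ κ) (profP η k x₀ κ (Real.cos t)) t := by
  have hW : HasDerivAt (fun t : ℝ => profW η k x₀ (Real.cos t))
      (profWd η k x₀ (Real.cos t) * (-Real.sin t)) t :=
    (profW_hasDerivAt η k x₀ (Real.cos t)).comp t (Real.hasDerivAt_cos t)
  have hs2 : HasDerivAt (fun t : ℝ => Real.sin t ^ 2) (2 * Real.sin t * Real.cos t) t := by
    simpa [mul_comm, mul_assoc, pow_one] using (Real.hasDerivAt_sin t).fun_pow 2
  have h1 : HasDerivAt (fun t : ℝ => 1 + Real.sin t ^ 2 * (profW η k x₀ (Real.cos t) - κ))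
      (2 * Real.sin t * Real.cos t * (profW η k x₀ (Real.cos t) - κ)
        + Real.sin t ^ 2 * (profWd η k x₀ (Real.cos t) * (-Real.sin t))) t :=
    (hs2.mul (hW.sub_const κ)).const_add 1
  have h2 := (Real.hasDerivAt_sin t).mul h1
  refine h2.congr_deriv (Eq.symm ?_)
  unfold profP
  have hsc : Real.sin t ^ 2 + Real.cos t ^ 2 = 1 := Real.sin_sq_add_cos_sq t
  linear_combination (-(3 * Real.cos t * (profW η k x₀ (Real.cos t) - κ)) +
    profWd η k x₀ (Real.cos t) * (1 - Real.cos t ^ 2 + Real.sin t ^ 2)) * hsc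

lemma prof_deriv (η k x₀ κ t : ℝ) :
    deriv (prof η k x₀ κ) t = profP η k x₀ κ (Real.cos t) :=
  (prof_hasDerivAt η k x₀ κ t).deriv

/-! ### Odd periodic functions have vanishing even-order derivatives at `0` and `π` -/

lemma odd_deriv_even {g : ℝ → ℝ} (h : ∀ x, g (-x) = - g x) (x : ℝ) :
    deriv g (-x) = deriv g x := by
  have h1 : (fun x : ℝ => g (-x)) = fun x => - g x := funext h
  have h2 := deriv_comp_neg g x
  rw [h1, deriv.fun_neg] at h2
  linarith

lemma even_deriv_odd {g : ℝ → ℝ} (h : ∀ x, g (-x) = g x) (x : ℝ) :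
    deriv g (-x) = - deriv g x := by
  have h1 : (fun x : ℝ => g (-x)) = g := funext h
  have h2 := deriv_comp_neg g x
  rw [h1] at h2
  linarith

lemma per_deriv {g : ℝ → ℝ} {c : ℝ} (h : ∀ x, g (x + c) = g x) (x : ℝ) :
    deriv g (x + c) = deriv g x := by
  have h1 : (fun x : ℝ => g (x + c)) = g := funext h
  have h2 := deriv_comp_add_const g c x
  rw [h1] at h2
  linarith

lemma oddper_iteratedDeriv (f : ℝ → ℝ) (hodd : ∀ x, f (-x) = - f x)
    (hper : ∀ x, f (x + 2*Real.pi) = f x) (n : ℕ) :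
    (∀ x, iteratedDeriv (2*n) f (-x) = - iteratedDeriv (2*n) f x) ∧
    (∀ x, iteratedDeriv (2*n) f (x + 2*Real.pi) = iteratedDeriv (2*n) f x) := by
  induction n with
  | zero => simpa using ⟨hodd, hper⟩
  | succ n ih =>
    obtain ⟨ho, hp⟩ := ih
    have e : 2 * (n+1) = (2*n + 1) + 1 := by ring
    rw [e, iteratedDeriv_succ, iteratedDeriv_succ]
    set g := iteratedDeriv (2*n) f with hg
    have hde : ∀ x, deriv g (-x) = deriv g x := odd_deriv_even ho
    have hdp : ∀ x, deriv g (x + 2*Real.pi) = deriv g x := per_deriv hp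
    exact ⟨even_deriv_odd hde, per_deriv hdp⟩

lemma oddper_evenDeriv_zero (f : ℝ → ℝ) (hodd : ∀ x, f (-x) = - f x)
    (hper : ∀ x, f (x + 2*Real.pi) = f x) (n : ℕ) :
    iteratedDeriv (2*n) f 0 = 0 ∧ iteratedDeriv (2*n) f Real.pi = 0 := by
  obtain ⟨ho, hp⟩ := oddper_iteratedDeriv f hodd hper n
  constructor
  · have := ho 0; simp at this; linarith
  · have h1 := hp (-Real.pi)
    have h2 := ho Real.pi
    have h3 : (-Real.pi) + 2*Real.pi = Real.pi := by ring
    rw [h3] at h1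
    linarith

/-! ### Change of variables -/

lemma cos_subst {F : ℝ → ℝ} (hF : Continuous F) :
    (∫ t in (0:ℝ)..Real.pi, Real.sin t * F (Real.cos t)) = ∫ x in (-1:ℝ)..1, F x := by
  have h := intervalIntegral.integral_comp_mul_deriv (a := (0:ℝ)) (b := Real.pi)
    (f := Real.cos) (f' := fun t => -Real.sin t) (g := F)
    (fun x _ => Real.hasDerivAt_cos x) (Real.continuous_sin.neg.continuousOn) hF
  rw [Real.cos_zero, Real.cos_pi] at h
  have h2 : (∫ t in (0:ℝ)..Real.pi, (F ∘ Real.cos) t * (-Real.sin t))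
      = ∫ t in (0:ℝ)..Real.pi, -(Real.sin t * F (Real.cos t)) := by
    congr 1; funext t; simp [Function.comp]; ring
  have h3 : (∫ x in (1:ℝ)..(-1:ℝ), F x) = -∫ x in (-1:ℝ)..1, F x :=
    intervalIntegral.integral_symm _ _
  rw [h2, intervalIntegral.integral_neg, h3] at h
  linarith

/-! ### Pointwise bounds on the sigmoid -/

lemma profW_mem (η k x₀ x : ℝ) (hη : 0 < η) :
    0 < profW η k x₀ x ∧ profW η k x₀ x < η := by
  have h1 := Real.arctan_lt_pi_div_two (k * (x - x₀))
  have h2 := Real.neg_pi_div_two_lt_arctan (k * (x - x₀))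
  have hπ := Real.pi_pos
  have hl : -(1/2 : ℝ) < Real.arctan (k * (x - x₀)) / Real.pi := by
    rw [lt_div_iff₀ hπ]; nlinarith
  have hr : Real.arctan (k * (x - x₀)) / Real.pi < 1/2 := by
    rw [div_lt_iff₀ hπ]; nlinarith
  unfold profW
  constructor <;> nlinarith

lemma profWd_pos (η k x₀ x : ℝ) (hη : 0 < η) (hk : 0 < k) : 0 < profWd η k x₀ x := by
  have hπ := Real.pi_pos
  unfold profWd
  positivity

/-! ### The three regional bounds on `(1-x²)² W'(x)` -/

lemma LA_core (η k A D s w : ℝ) (hη : 0 < η) (hk : 0 < k) (hk4 : 4 ≤ Real.pi * k)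
    (hA : 0 ≤ A) (hA1 : A ≤ 1) (hs : 0 ≤ s)
    (hkD : η * k * A^2 = Real.pi * D) (hD : 0 ≤ D) (hw : 0 ≤ w) (hwA : w ≤ A + 2*s) :
    η * k * w^2 ≤ Real.pi * (D + 2*η) * (1 + (k*s)^2) := by
  have hπ := Real.pi_pos
  have hπ3 := Real.pi_gt_three
  have hks : 2*(k*s) ≤ 1 + (k*s)^2 := by nlinarith [sq_nonneg (k*s - 1)]
  have p1 : η * k * A^2 ≤ Real.pi * D * (1 + (k*s)^2) := by
    rw [hkD]
    nlinarith [mul_nonneg (mul_nonneg hπ.le hD) (sq_nonneg (k*s))]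
  have p2 : 4*(η*k*A*s) ≤ 2*η*(1 + (k*s)^2) := by
    have h2 := mul_le_mul_of_nonneg_left hks (by positivity : (0:ℝ) ≤ 2*η*A)
    have h2b : 2*η*A*(1+(k*s)^2) ≤ 2*η*(1+(k*s)^2) := by
      nlinarith [mul_nonneg (mul_nonneg hη.le (by linarith : (0:ℝ) ≤ 1-A)) (sq_nonneg (k*s))]
    nlinarith [h2, h2b]
  have p3 : 4*(η*k*s^2) ≤ Real.pi*η*(1 + (k*s)^2) := by
    have h3 : 4*(k*s^2) ≤ Real.pi*(k*s)^2 := by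
      have := mul_le_mul_of_nonneg_right hk4 (mul_nonneg hk.le (sq_nonneg s))
      nlinarith
    have := mul_le_mul_of_nonneg_left h3 hη.le
    nlinarith [mul_nonneg hη.le hπ.le]
  have hq : η*k*w^2 ≤ η*k*(A + 2*s)^2 := by
    have hηk : (0:ℝ) ≤ η*k := by positivity
    nlinarith [mul_le_mul hwA hwA hw (by linarith)]
  have h4 : Real.pi*D*(1+(k*s)^2) + 2*η*(1+(k*s)^2) + Real.pi*η*(1+(k*s)^2)
      ≤ Real.pi*(D+2*η)*(1+(k*s)^2) := by
    nlinarith [mul_nonneg (mul_nonneg hη.le (by linarith : (0:ℝ) ≤ Real.pi - 2))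
      (by positivity : (0:ℝ) ≤ 1+(k*s)^2)]
  nlinarith [hq, p1, p2, p3, h4]

lemma LA (η k x₀ D x : ℝ) (hη : 0 < η) (hk : 0 < k) (hk4 : 4 ≤ Real.pi * k)
    (hx0 : 0 < x₀) (hx01 : x₀ < 1) (hx : -1 ≤ x) (hx' : x ≤ 1)
    (hkD : η * k * (1-x₀^2)^2 = Real.pi * D) (hD : 0 ≤ D) :
    (1-x^2)^2 * profWd η k x₀ x ≤ D + 2*η := by
  have hπ := Real.pi_pos
  unfold profWd
  set s := |x - x₀| with hs
  have hs0 : 0 ≤ s := abs_nonneg _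
  have hss : s^2 = (x - x₀)^2 := sq_abs _
  have hb : 1 - x^2 ≤ (1 - x₀^2) + 2*s := by
    rcases abs_cases (x - x₀) with ⟨he, h0⟩ | ⟨he, h0⟩ <;> nlinarith [he]
  have hcore := LA_core η k (1-x₀^2) D s (1-x^2) hη hk hk4
    (by nlinarith) (by nlinarith) hs0 hkD hD (by nlinarith) hb
  have hden : 0 < Real.pi * (1 + (k*(x-x₀))^2) := by positivity
  rw [show (1-x^2)^2 * (η*k/(Real.pi*(1+(k*(x-x₀))^2)))
      = (η*k*(1-x^2)^2)/(Real.pi*(1+(k*(x-x₀))^2)) from by ring, div_le_iff₀ hden]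
  have hu : (k*s)^2 = (k*(x-x₀))^2 := by rw [mul_pow, mul_pow, hss]
  rw [hu] at hcore
  nlinarith [hcore]

lemma LB (η k x₀ x ρ : ℝ) (hη : 0 < η) (hk : 0 < k) (hρ : 0 < ρ)
    (ht : ρ ≤ |x - x₀|) (h4 : 4*η ≤ Real.pi*k*ρ^2) (hx : -1 ≤ x) (hx' : x ≤ 1) :
    (1-x^2)^2 * profWd η k x₀ x ≤ 1/4 := by
  have hπ := Real.pi_pos
  have ht2 : ρ^2 ≤ (x-x₀)^2 := by
    have := sq_abs (x - x₀)
    nlinarith [sq_nonneg (|x-x₀| - ρ), abs_nonneg (x-x₀)]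
  have hden : 0 < Real.pi * (1 + (k*(x-x₀))^2) := by positivity
  have hWd : profWd η k x₀ x ≤ η*k/(Real.pi*(k*ρ)^2) := by
    unfold profWd
    apply div_le_div_of_nonneg_left (by positivity) (by positivity)
    nlinarith [sq_nonneg (k*(x-x₀)), mul_le_mul_of_nonneg_left ht2 (sq_nonneg k)]
  have hx2le : x^2 ≤ 1 := by nlinarith
  have hsq : (1-x^2)^2 ≤ 1 := by
    nlinarith [mul_nonneg (sq_nonneg x) (by linarith : (0:ℝ) ≤ 2 - x^2)]
  have hWd2 : η*k/(Real.pi*(k*ρ)^2) ≤ 1/4 := by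
    rw [div_le_iff₀ (by positivity)]
    nlinarith [mul_le_mul_of_nonneg_left h4 (mul_nonneg hk.le hρ.le)]
  have hWd0 : 0 ≤ profWd η k x₀ x := le_of_lt (profWd_pos η k x₀ x hη hk)
  nlinarith [mul_le_mul_of_nonneg_left hWd (sq_nonneg (1-x^2)),
    mul_le_mul_of_nonneg_right hsq hWd0]

lemma LC (η k x₀ x : ℝ) (hη : 0 < η) (hk : 0 < k) (hπk : 4*Real.pi ≤ k)
    (hx₀ : 0 < x₀) (hx : -1 ≤ x) (hx2 : x ≤ -(1/2)) :
    (1-x^2)^2 * profWd η k x₀ x ≤ (1+x)*η := by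
  have hπ := Real.pi_pos
  have hπ3 := Real.pi_gt_three
  have ht : (1:ℝ)/2 ≤ x₀ - x := by linarith
  have ht2 : (1:ℝ)/4 ≤ (x-x₀)^2 := by nlinarith
  have hWd : profWd η k x₀ x ≤ 4*η/(Real.pi*k) := by
    unfold profWd
    rw [div_le_div_iff₀ (by positivity) (by positivity)]
    nlinarith [mul_le_mul_of_nonneg_left ht2 (sq_nonneg k), mul_pos hη hπ,
      mul_pos (mul_pos hη hπ) (mul_pos hk hk), sq_nonneg k]
  have hx1 : 0 ≤ 1 + x := by linarith
  have e1 : (1-x)^2 ≤ 4 := by nlinarith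
  have e2 : (1+x)*(1-x)^2 ≤ 2 := by nlinarith [mul_le_mul_of_nonneg_left e1 hx1]
  have hsq : (1-x^2)^2 ≤ 2*(1+x) := by nlinarith [mul_le_mul_of_nonneg_left e2 hx1]
  have hWd0 : 0 ≤ profWd η k x₀ x := le_of_lt (profWd_pos η k x₀ x hη hk)
  have hπk8 : 8 ≤ Real.pi * k := by nlinarith [mul_le_mul_of_nonneg_left hπk hπ.le]
  have key : (1-x^2)^2 * profWd η k x₀ x ≤ 2*(1+x) * (4*η/(Real.pi*k)) := by
    nlinarith [mul_le_mul_of_nonneg_right hsq hWd0,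
      mul_le_mul_of_nonneg_left hWd (by linarith : (0:ℝ) ≤ 2*(1+x))]
  have last : 2*(1+x) * (4*η/(Real.pi*k)) ≤ (1+x)*η := by
    have e3 : 2*(1+x)*(4*η/(Real.pi*k)) = 8*(1+x)*η/(Real.pi*k) := by ring
    rw [e3, div_le_iff₀ (by positivity)]
    nlinarith [mul_le_mul_of_nonneg_left hπk8 (mul_nonneg hx1 hη.le)]
  linarith

/-! ### Pointwise arithmetic bounds -/

lemma cube_abs (x η κ W : ℝ) (hη0 : 0 < η) (hκ0 : 0 ≤ κ) (hκη : κ ≤ η)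
    (hW0 : 0 ≤ W) (hWη : W ≤ η) (hxl : -1 ≤ x) (hxr : x ≤ 1) :
    -(3*(1-x^2)*η) ≤ 3*x*(1-x^2)*(W-κ) ∧ 3*x*(1-x^2)*(W-κ) ≤ 3*(1-x^2)*η := by
  have h1 : 0 ≤ (1+x) * (η + (W-κ)) := by nlinarith
  have h2 : 0 ≤ (1-x) * (η - (W-κ)) := by nlinarith
  have h3 : 0 ≤ (1+x) * (η - (W-κ)) := by nlinarith
  have h4 : 0 ≤ (1-x) * (η + (W-κ)) := by nlinarith
  have hp1 : x*(W-κ) ≥ -η := by nlinarith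
  have hp2 : x*(W-κ) ≤ η := by nlinarith
  have hsq : 0 ≤ 1 - x^2 := by nlinarith
  constructor
  · nlinarith [mul_le_mul_of_nonneg_left hp1 (by linarith : (0:ℝ) ≤ 3*(1-x^2))]
  · nlinarith [mul_le_mul_of_nonneg_left hp2 (by linarith : (0:ℝ) ≤ 3*(1-x^2))]

lemma low1 (x η κ W d : ℝ) (hη0 : 0 < η) (hηle : η ≤ 1/32) (hκ0 : 0 ≤ κ) (hκη : κ ≤ η)
    (hW0 : 0 ≤ W) (hWη : W ≤ η) (hxl : -1 < x) (hx2 : x ≤ -(1/2))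
    (hd0 : 0 ≤ (1-x^2)^2*d) (hdb : (1-x^2)^2*d ≤ (1+x)*η) :
    -1 < x + 3*x*(1-x^2)*(W-κ) - (1-x^2)^2*d := by
  obtain ⟨hT, _⟩ := cube_abs x η κ W hη0 hκ0 hκη hW0 hWη (by linarith) (by linarith)
  have hS : (1-x^2) ≤ 2*(1+x) := by nlinarith [sq_nonneg (1+x)]
  have hT2 : 3*(1-x^2)*η ≤ 6*(1+x)*η := by nlinarith
  nlinarith [mul_pos (by linarith : (0:ℝ) < 1+x) (by linarith : (0:ℝ) < 1 - 7*η)]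

lemma low2 (x η κ W d : ℝ) (hη0 : 0 < η) (hηle : η ≤ 1/32) (hκ0 : 0 ≤ κ) (hκη : κ ≤ η)
    (hW0 : 0 ≤ W) (hWη : W ≤ η) (hx2 : -(1/2) ≤ x) (hxr : x ≤ 1)
    (hdb : (1-x^2)^2*d ≤ 1/4) :
    -1 < x + 3*x*(1-x^2)*(W-κ) - (1-x^2)^2*d := by
  obtain ⟨hT, _⟩ := cube_abs x η κ W hη0 hκ0 hκη hW0 hWη (by linarith) hxr
  have hsq : (1-x^2) ≤ 1 := by nlinarith [sq_nonneg x]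
  have hT2 : 3*(1-x^2)*η ≤ 3*η := by nlinarith
  linarith

lemma low3 (x ε x₀ η κ W d D : ℝ) (hε0 : 0 < ε) (hε1 : ε < 1)
    (hη : η = (1-ε)/32) (hκ0 : 0 ≤ κ) (hκη : κ ≤ η)
    (hW0 : 0 ≤ W) (hWη : W ≤ η) (hxl : x₀ - (1-ε)/4 ≤ x) (hxr : x ≤ 1)
    (hxlo : -1 ≤ x) (hD : D = x₀ + ε + 4*η) (hx0 : 0 < x₀) (hx01 : x₀ < 1)
    (hdb : (1-x^2)^2*d ≤ D + 2*η) :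
    -1 < x + 3*x*(1-x^2)*(W-κ) - (1-x^2)^2*d := by
  have hη0 : 0 < η := by rw [hη]; linarith
  obtain ⟨hT, _⟩ := cube_abs x η κ W hη0 hκ0 hκη hW0 hWη hxlo hxr
  have hsq : (1-x^2) ≤ 1 := by nlinarith [sq_nonneg x]
  have hT2 : 3*(1-x^2)*η ≤ 3*η := by nlinarith
  rw [hD] at hdb
  rw [hη] at *
  linarith

lemma up1 (x η κ W d : ℝ) (hη0 : 0 < η) (hηle : η ≤ 1/32) (hκ0 : 0 ≤ κ) (hκη : κ ≤ η)
    (hW0 : 0 ≤ W) (hWη : W ≤ η) (hxl : 0 ≤ x) (hxr : x < 1)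
    (hd0 : 0 ≤ (1-x^2)^2*d) :
    x + 3*x*(1-x^2)*(W-κ) - (1-x^2)^2*d < 1 := by
  have hsq : 0 ≤ 1 - x^2 := by nlinarith
  have hT : 3*x*(1-x^2)*(W-κ) ≤ 3*x*(1-x^2)*η :=
    mul_le_mul_of_nonneg_left (by linarith) (by positivity)
  have h6 : 3*x*(1-x^2)*η ≤ 6*η*(1-x) := by
    nlinarith [mul_nonneg (mul_nonneg hη0.le (by linarith : (0:ℝ) ≤ 1-x))
      (by nlinarith : (0:ℝ) ≤ 2 - x - x^2)]
  nlinarith [mul_pos (by linarith : (0:ℝ) < 1-x) (by linarith : (0:ℝ) < 1 - 6*η)]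

lemma up2 (x η κ W d : ℝ) (hη0 : 0 < η) (hηle : η ≤ 1/32) (hκ0 : 0 ≤ κ) (hκη : κ ≤ η)
    (hW0 : 0 ≤ W) (hWη : W ≤ η) (hxl : -1 ≤ x) (hxr : x ≤ 0)
    (hd0 : 0 ≤ (1-x^2)^2*d) :
    x + 3*x*(1-x^2)*(W-κ) - (1-x^2)^2*d < 1 := by
  have hsq : 0 ≤ 1 - x^2 := by nlinarith
  have hT : 3*x*(1-x^2)*(W-κ) ≤ 3*κ := by
    have e1 : 3*x*(1-x^2)*W ≤ 0 :=
      mul_nonpos_of_nonpos_of_nonneg (by nlinarith) hW0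
    have e2 : 3*(-x)*(1-x^2)*κ ≤ 3*κ := by
      nlinarith [mul_nonneg (by linarith : (0:ℝ) ≤ -x) hsq,
        mul_nonneg (mul_nonneg (by linarith : (0:ℝ) ≤ 1+x) (by linarith : (0:ℝ) ≤ -x)) hκ0,
        mul_nonneg (mul_nonneg (by linarith : (0:ℝ) ≤ -x) (by nlinarith : (0:ℝ) ≤ x^2)) hκ0]
    nlinarith
  linarith

lemma dipbound (ε x₀ η κ D : ℝ) (hε0 : 0 < ε) (hε1 : ε < 1)
    (hη : η = (1-ε)/32) (hκ0 : 0 ≤ κ) (hκη : κ ≤ η)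
    (hx0 : 0 < x₀) (hx01 : x₀ < 1) (hD : D = x₀ + ε + 4*η) :
    x₀ + 3*x₀*(1-x₀^2)*(η/2 - κ) - D < -ε := by
  have hη0 : 0 < η := by rw [hη]; linarith
  have hA0 : 0 < 1 - x₀^2 := by nlinarith
  have ht1 : 3*x₀*(1-x₀^2)*(η/2 - κ) ≤ 3*(η/2) := by
    rcases le_or_gt (η/2 - κ) 0 with hwk | hwk
    · nlinarith [mul_nonneg (mul_nonneg (by linarith : (0:ℝ) ≤ 3*x₀) hA0.le)
        (by linarith : (0:ℝ) ≤ -(η/2-κ))]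
    · nlinarith [mul_nonneg (mul_nonneg hx0.le hA0.le) hwk.le,
        mul_nonneg (by nlinarith : (0:ℝ) ≤ 1 - x₀*(1-x₀^2)) hwk.le]
  rw [hD]
  linarith

/-! ### The main bounds on `profP` -/

lemma profP_bounds (ε x₀ η D k κ : ℝ)
    (hε0 : 0 < ε) (hε1 : ε < 1) (hx0 : 0 < x₀) (hx1 : x₀ < 1)
    (hη : η = (1-ε)/32) (hD : D = x₀ + ε + 4*η)
    (hk : k = Real.pi * D / (η * (1-x₀^2)^2))
    (hκ0 : 0 ≤ κ) (hκη : κ ≤ η) :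
    (∀ x, -1 < x → x < 1 → -1 < profP η k x₀ κ x ∧ profP η k x₀ κ x < 1)
    ∧ profP η k x₀ κ x₀ < -ε := by
  have hπ := Real.pi_pos
  have hπ3 := Real.pi_gt_three
  have hβ : 0 < 1 - ε := by linarith
  have hη0 : 0 < η := by rw [hη]; linarith
  have hηle : η ≤ 1/32 := by rw [hη]; linarith
  have hA0 : 0 < 1 - x₀^2 := by nlinarith
  have hA1 : 1 - x₀^2 ≤ 1 := by nlinarith
  have hD0 : 0 < D := by rw [hD]; linarith
  have hDη : 4*η ≤ D := by rw [hD]; linarith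
  have hden0 : 0 < η * (1-x₀^2)^2 := by positivity
  have hkD : η * k * (1-x₀^2)^2 = Real.pi * D := by
    rw [hk]; field_simp
  have hk0 : 0 < k := by rw [hk]; positivity
  have hπD : Real.pi * D ≤ η * k := by
    nlinarith [mul_pos hη0 hk0, mul_nonneg (mul_nonneg hη0.le hk0.le)
      (mul_nonneg hA0.le (by linarith : (0:ℝ) ≤ 1 - (1-x₀^2)))]
  have hk4π : 4*Real.pi ≤ k := by nlinarith
  have hk4 : 4 ≤ Real.pi * k := by nlinarith
  have hπ2 : 9 ≤ Real.pi^2 := by nlinarith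
  have hD18 : 1/8 ≤ D := by rw [hD, hη]; nlinarith
  have hLBc : 4*η ≤ Real.pi*k*((1-ε)/4)^2 := by
    have h1 : Real.pi*((1-ε)/4)^2*(Real.pi * D) ≤ Real.pi*((1-ε)/4)^2*(η*k) :=
      mul_le_mul_of_nonneg_left hπD (by positivity)
    have hρsq : (0:ℝ) ≤ ((1-ε)/4)^2 := sq_nonneg _
    have t1 : ((1-ε)/4)^2*(1/8) ≤ ((1-ε)/4)^2*D := mul_le_mul_of_nonneg_left hD18 hρsq
    have t2 : 9*(((1-ε)/4)^2*D) ≤ Real.pi^2*(((1-ε)/4)^2*D) :=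
      mul_le_mul_of_nonneg_right hπ2 (mul_nonneg hρsq hD0.le)
    have h3 : 4*η^2 ≤ Real.pi^2*((1-ε)/4)^2*D := by
      rw [hη]
      linarith [t1, t2, sq_nonneg (1-ε)]
    have h2 : η*(4*η) ≤ η*(Real.pi*k*((1-ε)/4)^2) := by linarith [h1, h3]
    exact le_of_mul_le_mul_left h2 hη0
  constructor
  · intro x hxl hxr
    obtain ⟨hW0, hWη⟩ := profW_mem η k x₀ x hη0
    have hWd0 := profWd_pos η k x₀ x hη0 hk0
    have hWdsq : 0 ≤ (1-x^2)^2 * profWd η k x₀ x := mul_nonneg (sq_nonneg _) hWd0.le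
    constructor
    · rcases le_or_gt x (-(1/2)) with hc1 | hc1
      · exact low1 x η κ _ _ hη0 hηle hκ0 hκη hW0.le hWη.le hxl hc1 hWdsq
          (LC η k x₀ x hη0 hk0 hk4π hx0 (by linarith) hc1)
      rcases le_or_gt x (x₀ - (1-ε)/4) with hc2 | hc2
      · have habs : (1-ε)/4 ≤ |x - x₀| := by
          rw [abs_sub_comm, abs_of_nonneg (by linarith)]; linarith
        exact low2 x η κ _ _ hη0 hηle hκ0 hκη hW0.le hWη.le (by linarith) (by linarith)
          (LB η k x₀ x ((1-ε)/4) hη0 hk0 (by linarith) habs hLBc (by linarith) (by linarith))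
      · exact low3 x ε x₀ η κ _ _ D hε0 hε1 hη hκ0 hκη hW0.le hWη.le (by linarith)
          (by linarith) (by linarith) hD hx0 hx1
          (LA η k x₀ D x hη0 hk0 hk4 hx0 hx1 (by linarith) (by linarith) hkD hD0.le)
    · rcases le_or_gt 0 x with hc | hc
      · exact up1 x η κ _ _ hη0 hηle hκ0 hκη hW0.le hWη.le hc hxr hWdsq
      · exact up2 x η κ _ _ hη0 hηle hκ0 hκη hW0.le hWη.le (by linarith) hc.le hWdsq
  · have hW : profW η k x₀ x₀ = η/2 := by
      unfold profW
      rw [sub_self, mul_zero, Real.arctan_zero]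
      ring
    have hWd : profWd η k x₀ x₀ = η*k/Real.pi := by
      unfold profWd
      rw [sub_self, mul_zero]
      norm_num
    have hDdip : (1-x₀^2)^2 * (η*k/Real.pi) = D := by
      field_simp
      linarith [hkD]
    unfold profP
    rw [hW, hWd, hDdip]
    exact dipbound ε x₀ η κ D hε0 hε1 hη hκ0 hκη hx0 hx1 hD

/-! ### Normalization -/

lemma profW_continuous (η k x₀ : ℝ) : Continuous (profW η k x₀) :=
  (profW_contDiff η k x₀).continuous

lemma kappa_bounds (η k x₀ : ℝ) (hη : 0 < η) :
    0 ≤ (3/4) * ∫ x in (-1:ℝ)..1, (1-x^2) * profW η k x₀ x ∧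
    (3/4) * (∫ x in (-1:ℝ)..1, (1-x^2) * profW η k x₀ x) ≤ η := by
  have hc : Continuous (fun x => (1-x^2) * profW η k x₀ x) :=
    (continuous_const.sub (continuous_pow 2)).mul (profW_continuous η k x₀)
  have hnn : 0 ≤ ∫ x in (-1:ℝ)..1, (1-x^2) * profW η k x₀ x := by
    apply intervalIntegral.integral_nonneg (by norm_num)
    intro u hu
    have := (profW_mem η k x₀ u hη).1
    have h1 : 0 ≤ 1 - u^2 := by
      simp only [Set.mem_Icc] at hu
      nlinarith [hu.1, hu.2]
    positivity
  have hub : (∫ x in (-1:ℝ)..1, (1-x^2) * profW η k x₀ x)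
      ≤ ∫ x in (-1:ℝ)..1, η * (1-x^2) := by
    apply intervalIntegral.integral_mono_on (by norm_num)
      (hc.intervalIntegrable _ _)
      ((continuous_const.mul (continuous_const.sub (continuous_pow 2))).intervalIntegrable _ _)
    intro u hu
    simp only [Set.mem_Icc] at hu
    have hm := profW_mem η k x₀ u hη
    have h1 : 0 ≤ 1 - u^2 := by nlinarith [hu.1, hu.2]
    show (1-u^2) * profW η k x₀ u ≤ η * (1-u^2)
    nlinarith [hm.2, hm.1]
  have hval : (∫ x in (-1:ℝ)..1, η * (1-x^2)) = η * (4/3) := by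
    rw [intervalIntegral.integral_const_mul]
    have : (∫ x in (-1:ℝ)..1, (1 - x^2)) =
        (∫ x in (-1:ℝ)..1, (1:ℝ)) - (∫ x in (-1:ℝ)..1, x^2) := by
      rw [← intervalIntegral.integral_sub intervalIntegrable_const
        (Continuous.intervalIntegrable (by continuity) _ _)]
    rw [this]
    simp [integral_pow]
    norm_num
  constructor
  · positivity
  · rw [hval] at hub; linarith

lemma prof_normalized (η k x₀ κ : ℝ)
    (hκ : κ = (3/4) * ∫ x in (-1:ℝ)..1, (1-x^2) * profW η k x₀ x) :
    (∫ t in (0:ℝ)..Real.pi, prof η k x₀ κ t) = 2 := by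
  set F : ℝ → ℝ := fun x => 1 + (1-x^2) * (profW η k x₀ x - κ) with hF
  have hFc : Continuous F := by
    apply continuous_const.add
    exact (continuous_const.sub (continuous_pow 2)).mul
      ((profW_continuous η k x₀).sub continuous_const)
  have h1 : (∫ t in (0:ℝ)..Real.pi, prof η k x₀ κ t)
      = ∫ t in (0:ℝ)..Real.pi, Real.sin t * F (Real.cos t) := by
    apply intervalIntegral.integral_congr
    intro t _
    have hs := Real.sin_sq_add_cos_sq t
    simp only [prof, hF]
    linear_combination (Real.sin t * (profW η k x₀ (Real.cos t) - κ)) * hs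
  rw [h1, cos_subst hFc]
  have hsplit : (∫ x in (-1:ℝ)..1, F x) =
      (∫ x in (-1:ℝ)..1, (1:ℝ)) + ((∫ x in (-1:ℝ)..1, (1-x^2) * profW η k x₀ x)
        - κ * (∫ x in (-1:ℝ)..1, (1-x^2))) := by
    have hc1 : Continuous (fun x : ℝ => (1-x^2) * profW η k x₀ x) :=
      (continuous_const.sub (continuous_pow 2)).mul (profW_continuous η k x₀)
    have hc2 : Continuous (fun x : ℝ => (1:ℝ) - x^2) := by continuity
    rw [← intervalIntegral.integral_const_mul, ← intervalIntegral.integral_sub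
      (hc1.intervalIntegrable _ _) ((show Continuous fun x => κ * (1 - x^2) from continuous_const.mul hc2).intervalIntegrable _ _),
      ← intervalIntegral.integral_add intervalIntegrable_const
      ((show Continuous fun x => (1-x^2) * profW η k x₀ x - κ * (1 - x^2) from hc1.sub (continuous_const.mul hc2)).intervalIntegrable _ _)]
    apply intervalIntegral.integral_congr
    intro x _
    simp only [hF]
    ring
  rw [hsplit]
  have hval : (∫ x in (-1:ℝ)..1, ((1:ℝ)-x^2)) = 4/3 := by
    have : (∫ x in (-1:ℝ)..1, ((1:ℝ) - x^2)) =
        (∫ x in (-1:ℝ)..1, (1:ℝ)) - (∫ x in (-1:ℝ)..1, x^2) := by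
      rw [← intervalIntegral.integral_sub intervalIntegrable_const
        (Continuous.intervalIntegrable (by continuity) _ _)]
    rw [this]
    simp [integral_pow]
    norm_num
  rw [hval]
  simp
  rw [hκ]
  ring

/-! ### Endpoint values of `profP` -/

lemma profP_one (η k x₀ κ : ℝ) : profP η k x₀ κ 1 = 1 := by
  unfold profP
  norm_num

lemma profP_negone (η k x₀ κ : ℝ) : profP η k x₀ κ (-1) = -1 := by
  unfold profP
  norm_num

lemma prof_odd (η k x₀ κ : ℝ) (t : ℝ) : prof η k x₀ κ (-t) = - prof η k x₀ κ t := by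
  unfold prof
  rw [Real.sin_neg, Real.cos_neg]
  ring

lemma prof_per (η k x₀ κ : ℝ) (t : ℝ) : prof η k x₀ κ (t + 2*Real.pi) = prof η k x₀ κ t := by
  unfold prof
  rw [Real.sin_add_two_pi, Real.cos_add_two_pi]

/-- For every `ε ∈ (0,1)` and every `δ ∈ (0, π/2)` there exist `ℓ > δ`
and a normalized profile function `γ` of length `ℓ` with `γ' δ < −ε`. -/
theorem stmt_11 (ε δ : ℝ) (hε : ε ∈ Set.Ioo 0 1) (hδ : δ ∈ Set.Ioo 0 (Real.pi / 2)) :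
    ∃ ℓ : ℝ, ∃ γ : ℝ → ℝ, δ < ℓ ∧ IsProfileFunction ℓ γ ∧ IsNormalizedProfile ℓ γ ∧
      deriv γ δ < -ε := by
  obtain ⟨hε0, hε1⟩ := hε
  obtain ⟨hδ0, hδπ⟩ := hδ
  have hπ := Real.pi_pos
  set x₀ : ℝ := Real.cos δ with hx₀def
  have hx0 : 0 < x₀ := Real.cos_pos_of_mem_Ioo ⟨by linarith, hδπ⟩
  have hx1 : x₀ < 1 := by
    have h := Real.cos_lt_cos_of_nonneg_of_le_pi (le_refl 0) (by linarith) hδ0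
    rwa [Real.cos_zero] at h
  set η : ℝ := (1-ε)/32 with hηdef
  have hη0 : 0 < η := by rw [hηdef]; linarith
  have hηle : η ≤ 1/32 := by rw [hηdef]; linarith
  set D : ℝ := x₀ + ε + 4*η with hDdef
  set k : ℝ := Real.pi * D / (η * (1-x₀^2)^2) with hkdef
  set κ : ℝ := (3/4) * ∫ x in (-1:ℝ)..1, (1-x^2) * profW η k x₀ x with hκdef
  obtain ⟨hκ0, hκη⟩ := kappa_bounds η k x₀ hη0
  rw [← hκdef] at hκ0 hκη
  have hbounds := profP_bounds ε x₀ η D k κ hε0 hε1 hx0 hx1 hηdef hDdef hkdef hκ0 hκη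
  refine ⟨Real.pi, prof η k x₀ κ, by linarith, ?_, ?_, ?_⟩
  · constructor
    · exact hπ
    · exact prof_contDiff η k x₀ κ
    · unfold prof; simp
    · unfold prof; simp
    · intro t ht
      obtain ⟨ht0, htπ⟩ := ht
      have hsin := Real.sin_pos_of_pos_of_lt_pi ht0 htπ
      have hs2 : Real.sin t ^ 2 ≤ 1 := Real.sin_sq_le_one t
      have hW := (profW_mem η k x₀ (Real.cos t) hη0).1
      have hfac : 0 < 1 + Real.sin t ^ 2 * (profW η k x₀ (Real.cos t) - κ) := by
        nlinarith [mul_nonneg (sq_nonneg (Real.sin t)) hW.le,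
          mul_le_mul_of_nonneg_right hs2 hκ0, sq_nonneg (Real.sin t)]
      exact mul_pos hsin hfac
    · rw [prof_deriv, Real.cos_zero, profP_one]
    · rw [prof_deriv, Real.cos_pi, profP_negone]
    · intro t ht
      obtain ⟨ht0, htπ⟩ := ht
      rw [prof_deriv]
      have hc1 : Real.cos t < 1 := by
        have h := Real.cos_lt_cos_of_nonneg_of_le_pi (le_refl 0) htπ.le ht0
        rwa [Real.cos_zero] at h
      have hc2 : -1 < Real.cos t := by
        have h := Real.cos_lt_cos_of_nonneg_of_le_pi ht0.le (le_refl Real.pi) htπ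
        rwa [Real.cos_pi] at h
      obtain ⟨hl, hr⟩ := hbounds.1 (Real.cos t) hc2 hc1
      exact abs_lt.mpr ⟨hl, hr⟩
    · intro n
      exact (oddper_evenDeriv_zero _ (prof_odd η k x₀ κ) (prof_per η k x₀ κ) n).1
    · intro n
      exact (oddper_evenDeriv_zero _ (prof_odd η k x₀ κ) (prof_per η k x₀ κ) n).2
  · exact prof_normalized η k x₀ κ hκdef
  · rw [prof_deriv, ← hx₀def]
    linarith [hbounds.2]
end

section
/- There exist ℓ > 0, a normalized profile function γ of length ℓ, and a point t₀ ∈ (0,ℓ) with γ'(t₀) ≠ 0 such that γ(t₀)² − γ'(t₀)·Γ(t₀) < 0; equivalently, the action (γ(t₀)² − γ'(t₀)Γ(t₀))/γ'(t₀)² of the invariant measure supported on the periodic orbit over the latitude {t = t₀} at energy parameter m = γ(t₀)/|γ'(t₀)| is negative. (By McDuff's criterion this produces a symplectic magnetic system (S², g, σ) with an energy level not of contact type.) -/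
open Real

noncomputable section StmtAux

/-- the degree-8 polynomial defining the profile -/
def Pp (c : ℝ) : ℝ := (317/400 : ℝ) + (211/400 : ℝ) * c + (-(763/400) : ℝ) * c ^ 2 + (-(13/10) : ℝ) * c ^ 3 + (321/100 : ℝ) * c ^ 4 + (379/400 : ℝ) * c ^ 5 + (-(178367/34000) : ℝ) * c ^ 6 + (-(7/40) : ℝ) * c ^ 7 + (164937/34000 : ℝ) * c ^ 8

/-- derivative of `Pp` -/
def dPp (c : ℝ) : ℝ := (211/400 : ℝ) + (-(763/200) : ℝ) * c + (-(39/10) : ℝ) * c ^ 2 + (321/25 : ℝ) * c ^ 3 + (379/80 : ℝ) * c ^ 4 + (-(535101/17000) : ℝ) * c ^ 5 + (-(49/40) : ℝ) * c ^ 6 + (164937/4250 : ℝ) * c ^ 7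

/-- `Qp c = c * Pp c - (1 - c^2) * dPp c`; `(10/17) * Qp (cos (10 t / 17))` is `γ'`. -/
def Qp (c : ℝ) : ℝ := c * Pp c - (1 - c ^ 2) * dPp c

/-- primitive: `Tp x = -∫_0^x Pp` -/
def Tp (x : ℝ) : ℝ := (0 : ℝ) + (-(317/400) : ℝ) * x + (-(211/800) : ℝ) * x ^ 2 + (763/1200 : ℝ) * x ^ 3 + (13/40 : ℝ) * x ^ 4 + (-(321/500) : ℝ) * x ^ 5 + (-(379/2400) : ℝ) * x ^ 6 + (25481/34000 : ℝ) * x ^ 7 + (7/320 : ℝ) * x ^ 8 + (-(54979/102000) : ℝ) * x ^ 9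

/-- the profile function -/
def gam (t : ℝ) : ℝ := Real.sin (10 / 17 * t) * Pp (Real.cos (10 / 17 * t))

/-- the primitive of `gam` -/
def Gg (t : ℝ) : ℝ := 17 / 10 * Tp (Real.cos (10 / 17 * t))

lemma sumP_pos {x y : ℝ} (hx : 0 < x) (hy : 0 < y) :
    0 < (17/42949672960 : ℝ) * x ^ 0 * y ^ 32 + (45487/9126805504000 : ℝ) * x ^ 1 * y ^ 31 + (133813/4563402752000 : ℝ) * x ^ 2 * y ^ 30 + (1707629/9126805504000 : ℝ) * x ^ 3 * y ^ 29 + (8297273/4563402752000 : ℝ) * x ^ 4 * y ^ 28 + (137986749/9126805504000 : ℝ) * x ^ 5 * y ^ 27 + (207751401/2281701376000 : ℝ) * x ^ 6 * y ^ 26 + (3774376463/9126805504000 : ℝ) * x ^ 7 * y ^ 25 + (6808556881/4563402752000 : ℝ) * x ^ 8 * y ^ 24 + (40523836863/9126805504000 : ℝ) * x ^ 9 * y ^ 23 + (50953535231/4563402752000 : ℝ) * x ^ 10 * y ^ 22 + (219526182973/9126805504000 : ℝ) * x ^ 11 * y ^ 21 + (203831075571/4563402752000 : ℝ) * x ^ 12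 * y ^ 20 + (653811376133/9126805504000 : ℝ) * x ^ 13 * y ^ 19 + (56575222187/570425344000 : ℝ) * x ^ 14 * y ^ 18 + (63550998999/536870912000 : ℝ) * x ^ 15 * y ^ 17 + (65279244851/536870912000 : ℝ) * x ^ 16 * y ^ 16 + (57629714549/536870912000 : ℝ) * x ^ 17 * y ^ 15 + (371383306371/4563402752000 : ℝ) * x ^ 18 * y ^ 14 + (483845142383/9126805504000 : ℝ) * x ^ 19 * y ^ 13 + (135756294271/4563402752000 : ℝ) * x ^ 20 * y ^ 12 + (131972661423/9126805504000 : ℝ) * x ^ 21 * y ^ 11 + (13999065253/2281701376000 : ℝ) * x ^ 22 * y ^ 10 + (20864454613/9126805504000 : ℝ) * x ^ 23 * y ^ 9 + (3398662881/4563402752000 : ℝ) * x ^ 24 * y ^ 8 + (1890510413/9126805504000 : ℝ) * x ^ 25 * y ^ 7 + (214342057/4563402752000 : ℝ) * x ^ 26 * y ^ 6 + (74861159/9126805504000 : ℝ) * x ^ 27 * y ^ 5 + (5004373/4563402752000 : ℝ) * x ^ 28 * y ^ 4 + (1361679/9126805504000 : ℝ) * x ^ 29 * y ^ 3 + (34027/1140850688000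 : ℝ) * x ^ 30 * y ^ 2 + (46677/9126805504000 : ℝ) * x ^ 31 * y ^ 1 + (17/42949672960 : ℝ) * x ^ 32 * y ^ 0 :=
  (add_pos (add_pos (add_pos (add_pos (add_pos (add_pos (add_pos (add_pos (add_pos (add_pos (add_pos (add_pos (add_pos (add_pos (add_pos (add_pos (add_pos (add_pos (add_pos (add_pos (add_pos (add_pos (add_pos (add_pos (add_pos (add_pos (add_pos (add_pos (add_pos (add_pos (add_pos (add_pos (mul_pos (mul_pos (by norm_num : (0:ℝ) < (17/42949672960 : ℝ)) (pow_pos hx 0)) (pow_pos hy 32)) (mul_pos (mul_pos (by norm_num : (0:ℝ) < (45487/9126805504000 : ℝ)) (pow_pos hx 1)) (pow_pos hy 31))) (mul_pos (mul_pos (by norm_num : (0:ℝ) < (133813/4563402752000 : ℝ)) (pow_pos hx 2)) (pow_pos hy 30))) (mul_pos (mul_pos (by norm_num : (0:ℝ) < (1707629/9126805504000 : ℝ)) (pow_pos hx 3)) (pow_pos hy 29))) (mul_pos (mul_pos (by norm_num : (0:ℝ) < (8297273/4563402752000 : ℝ)) (pow_pos hx 4)) (pow_pos hy 28))) (mul_pos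 (mul_pos (by norm_num : (0:ℝ) < (137986749/9126805504000 : ℝ)) (pow_pos hx 5)) (pow_pos hy 27))) (mul_pos (mul_pos (by norm_num : (0:ℝ) < (207751401/2281701376000 : ℝ)) (pow_pos hx 6)) (pow_pos hy 26))) (mul_pos (mul_pos (by norm_num : (0:ℝ) < (3774376463/9126805504000 : ℝ)) (pow_pos hx 7)) (pow_pos hy 25))) (mul_pos (mul_pos (by norm_num : (0:ℝ) < (6808556881/4563402752000 : ℝ)) (pow_pos hx 8)) (pow_pos hy 24))) (mul_pos (mul_pos (by norm_num : (0:ℝ) < (40523836863/9126805504000 : ℝ)) (pow_pos hx 9)) (pow_pos hy 23))) (mul_pos (mul_pos (by norm_num : (0:ℝ) < (50953535231/4563402752000 : ℝ)) (pow_pos hx 10)) (pow_pos hy 22))) (mul_pos (mul_pos (by norm_num : (0:ℝ) < (219526182973/9126805504000 : ℝ)) (pow_pos hx 11)) (pow_pos hy 21))) (mul_pos (mul_pos (by norm_num : (0:ℝ) < (203831075571/4563402752000 : ℝ)) (pow_pos hx 12)) (pow_pos hy 20))) (mul_pos (mul_pos (by norm_num : (0:ℝ) < (653811376133/9126805504000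 : ℝ)) (pow_pos hx 13)) (pow_pos hy 19))) (mul_pos (mul_pos (by norm_num : (0:ℝ) < (56575222187/570425344000 : ℝ)) (pow_pos hx 14)) (pow_pos hy 18))) (mul_pos (mul_pos (by norm_num : (0:ℝ) < (63550998999/536870912000 : ℝ)) (pow_pos hx 15)) (pow_pos hy 17))) (mul_pos (mul_pos (by norm_num : (0:ℝ) < (65279244851/536870912000 : ℝ)) (pow_pos hx 16)) (pow_pos hy 16))) (mul_pos (mul_pos (by norm_num : (0:ℝ) < (57629714549/536870912000 : ℝ)) (pow_pos hx 17)) (pow_pos hy 15))) (mul_pos (mul_pos (by norm_num : (0:ℝ) < (371383306371/4563402752000 : ℝ)) (pow_pos hx 18)) (pow_pos hy 14))) (mul_pos (mul_pos (by norm_num : (0:ℝ) < (483845142383/9126805504000 : ℝ)) (pow_pos hx 19)) (pow_pos hy 13))) (mul_pos (mul_pos (by norm_num : (0:ℝ) < (135756294271/4563402752000 : ℝ)) (pow_pos hx 20)) (pow_pos hy 12))) (mul_pos (mul_pos (by norm_num : (0:ℝ) < (131972661423/9126805504000 : ℝ)) (pow_pos hx 21)) (pow_pos hy 11))) (mul_pos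 (mul_pos (by norm_num : (0:ℝ) < (13999065253/2281701376000 : ℝ)) (pow_pos hx 22)) (pow_pos hy 10))) (mul_pos (mul_pos (by norm_num : (0:ℝ) < (20864454613/9126805504000 : ℝ)) (pow_pos hx 23)) (pow_pos hy 9))) (mul_pos (mul_pos (by norm_num : (0:ℝ) < (3398662881/4563402752000 : ℝ)) (pow_pos hx 24)) (pow_pos hy 8))) (mul_pos (mul_pos (by norm_num : (0:ℝ) < (1890510413/9126805504000 : ℝ)) (pow_pos hx 25)) (pow_pos hy 7))) (mul_pos (mul_pos (by norm_num : (0:ℝ) < (214342057/4563402752000 : ℝ)) (pow_pos hx 26)) (pow_pos hy 6))) (mul_pos (mul_pos (by norm_num : (0:ℝ) < (74861159/9126805504000 : ℝ)) (pow_pos hx 27)) (pow_pos hy 5))) (mul_pos (mul_pos (by norm_num : (0:ℝ) < (5004373/4563402752000 : ℝ)) (pow_pos hx 28)) (pow_pos hy 4))) (mul_pos (mul_pos (by norm_num : (0:ℝ) < (1361679/9126805504000 : ℝ)) (pow_pos hx 29)) (pow_pos hy 3))) (mul_pos (mul_pos (by norm_num : (0:ℝ) < (34027/1140850688000 : ℝ))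 (pow_pos hx 30)) (pow_pos hy 2))) (mul_pos (mul_pos (by norm_num : (0:ℝ) < (46677/9126805504000 : ℝ)) (pow_pos hx 31)) (pow_pos hy 1))) (mul_pos (mul_pos (by norm_num : (0:ℝ) < (17/42949672960 : ℝ)) (pow_pos hx 32)) (pow_pos hy 0)))

lemma sumA_pos {x y : ℝ} (hx : 0 < x) (hy : 0 < y) :
    0 < (54391/4563402752000 : ℝ) * x ^ 0 * y ^ 32 + (3434951/18253611008000 : ℝ) * x ^ 1 * y ^ 31 + (24081583/18253611008000 : ℝ) * x ^ 2 * y ^ 30 + (99222697/18253611008000 : ℝ) * x ^ 3 * y ^ 29 + (285411183/18253611008000 : ℝ) * x ^ 4 * y ^ 28 + (787287743/18253611008000 : ℝ) * x ^ 5 * y ^ 27 + (2860423467/18253611008000 : ℝ) * x ^ 6 * y ^ 26 + (656398777/1073741824000 : ℝ) * x ^ 7 * y ^ 25 + (36609322691/18253611008000 : ℝ) * x ^ 8 * y ^ 24 + (98948609859/18253611008000 : ℝ) * x ^ 9 * y ^ 23 + (235867363411/18253611008000 : ℝ) * x ^ 10 * y ^ 22 + (529849657789/18253611008000 : ℝ)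 * x ^ 11 * y ^ 21 + (1131804805731/18253611008000 : ℝ) * x ^ 12 * y ^ 20 + (2205688809419/18253611008000 : ℝ) * x ^ 13 * y ^ 19 + (3747889493231/18253611008000 : ℝ) * x ^ 14 * y ^ 18 + (318015545757/1073741824000 : ℝ) * x ^ 15 * y ^ 17 + (385120731743/1073741824000 : ℝ) * x ^ 16 * y ^ 16 + (6635229326869/18253611008000 : ℝ) * x ^ 17 * y ^ 15 + (5628219451581/18253611008000 : ℝ) * x ^ 18 * y ^ 14 + (4002366478619/18253611008000 : ℝ) * x ^ 19 * y ^ 13 + (2394767840861/18253611008000 : ℝ) * x ^ 20 * y ^ 12 + (1214690868189/18253611008000 : ℝ) * x ^ 21 * y ^ 11 + (529668871441/18253611008000 : ℝ) * x ^ 22 * y ^ 10 + (202679324059/18253611008000 : ℝ) * x ^ 23 * y ^ 9 + (4076177673/1073741824000 : ℝ) * x ^ 24 * y ^ 8 + (21070171553/18253611008000 : ℝ) * x ^ 25 * y ^ 7 + (5456619137/18253611008000 : ℝ) * x ^ 26 * y ^ 6 + (1110350527/18253611008000 : ℝ) * x ^ 27 * y ^ 5 + (157563153/18253611008000 : ℝ)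 * x ^ 28 * y ^ 4 + (12636377/18253611008000 : ℝ) * x ^ 29 * y ^ 3 + (327829/18253611008000 : ℝ) * x ^ 30 * y ^ 2 + (24431/18253611008000 : ℝ) * x ^ 31 * y ^ 1 + (17/42949672960 : ℝ) * x ^ 32 * y ^ 0 :=
  (add_pos (add_pos (add_pos (add_pos (add_pos (add_pos (add_pos (add_pos (add_pos (add_pos (add_pos (add_pos (add_pos (add_pos (add_pos (add_pos (add_pos (add_pos (add_pos (add_pos (add_pos (add_pos (add_pos (add_pos (add_pos (add_pos (add_pos (add_pos (add_pos (add_pos (add_pos (add_pos (mul_pos (mul_pos (by norm_num : (0:ℝ) < (54391/4563402752000 : ℝ)) (pow_pos hx 0)) (pow_pos hy 32)) (mul_pos (mul_pos (by norm_num : (0:ℝ) < (3434951/18253611008000 : ℝ)) (pow_pos hx 1)) (pow_pos hy 31))) (mul_pos (mul_pos (by norm_num : (0:ℝ) < (24081583/18253611008000 : ℝ)) (pow_pos hx 2)) (pow_pos hy 30))) (mul_pos (mul_pos (by norm_num : (0:ℝ) < (99222697/18253611008000 : ℝ)) (pow_pos hx 3)) (pow_pos hy 29))) (mul_pos (mul_pos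 (by norm_num : (0:ℝ) < (285411183/18253611008000 : ℝ)) (pow_pos hx 4)) (pow_pos hy 28))) (mul_pos (mul_pos (by norm_num : (0:ℝ) < (787287743/18253611008000 : ℝ)) (pow_pos hx 5)) (pow_pos hy 27))) (mul_pos (mul_pos (by norm_num : (0:ℝ) < (2860423467/18253611008000 : ℝ)) (pow_pos hx 6)) (pow_pos hy 26))) (mul_pos (mul_pos (by norm_num : (0:ℝ) < (656398777/1073741824000 : ℝ)) (pow_pos hx 7)) (pow_pos hy 25))) (mul_pos (mul_pos (by norm_num : (0:ℝ) < (36609322691/18253611008000 : ℝ)) (pow_pos hx 8)) (pow_pos hy 24))) (mul_pos (mul_pos (by norm_num : (0:ℝ) < (98948609859/18253611008000 : ℝ)) (pow_pos hx 9)) (pow_pos hy 23))) (mul_pos (mul_pos (by norm_num : (0:ℝ) < (235867363411/18253611008000 : ℝ)) (pow_pos hx 10)) (pow_pos hy 22))) (mul_pos (mul_pos (by norm_num : (0:ℝ) < (529849657789/18253611008000 : ℝ)) (pow_pos hx 11)) (pow_pos hy 21))) (mul_pos (mul_pos (by norm_num : (0:ℝ) < (1131804805731/18253611008000 : ℝ))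 (pow_pos hx 12)) (pow_pos hy 20))) (mul_pos (mul_pos (by norm_num : (0:ℝ) < (2205688809419/18253611008000 : ℝ)) (pow_pos hx 13)) (pow_pos hy 19))) (mul_pos (mul_pos (by norm_num : (0:ℝ) < (3747889493231/18253611008000 : ℝ)) (pow_pos hx 14)) (pow_pos hy 18))) (mul_pos (mul_pos (by norm_num : (0:ℝ) < (318015545757/1073741824000 : ℝ)) (pow_pos hx 15)) (pow_pos hy 17))) (mul_pos (mul_pos (by norm_num : (0:ℝ) < (385120731743/1073741824000 : ℝ)) (pow_pos hx 16)) (pow_pos hy 16))) (mul_pos (mul_pos (by norm_num : (0:ℝ) < (6635229326869/18253611008000 : ℝ)) (pow_pos hx 17)) (pow_pos hy 15))) (mul_pos (mul_pos (by norm_num : (0:ℝ) < (5628219451581/18253611008000 : ℝ)) (pow_pos hx 18)) (pow_pos hy 14))) (mul_pos (mul_pos (by norm_num : (0:ℝ) < (4002366478619/18253611008000 : ℝ)) (pow_pos hx 19)) (pow_pos hy 13))) (mul_pos (mul_pos (by norm_num : (0:ℝ) < (2394767840861/18253611008000 : ℝ)) (pow_pos hx 20)) (pow_pos hy 12))) (mul_pos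 (mul_pos (by norm_num : (0:ℝ) < (1214690868189/18253611008000 : ℝ)) (pow_pos hx 21)) (pow_pos hy 11))) (mul_pos (mul_pos (by norm_num : (0:ℝ) < (529668871441/18253611008000 : ℝ)) (pow_pos hx 22)) (pow_pos hy 10))) (mul_pos (mul_pos (by norm_num : (0:ℝ) < (202679324059/18253611008000 : ℝ)) (pow_pos hx 23)) (pow_pos hy 9))) (mul_pos (mul_pos (by norm_num : (0:ℝ) < (4076177673/1073741824000 : ℝ)) (pow_pos hx 24)) (pow_pos hy 8))) (mul_pos (mul_pos (by norm_num : (0:ℝ) < (21070171553/18253611008000 : ℝ)) (pow_pos hx 25)) (pow_pos hy 7))) (mul_pos (mul_pos (by norm_num : (0:ℝ) < (5456619137/18253611008000 : ℝ)) (pow_pos hx 26)) (pow_pos hy 6))) (mul_pos (mul_pos (by norm_num : (0:ℝ) < (1110350527/18253611008000 : ℝ)) (pow_pos hx 27)) (pow_pos hy 5))) (mul_pos (mul_pos (by norm_num : (0:ℝ) < (157563153/18253611008000 : ℝ)) (pow_pos hx 28)) (pow_pos hy 4))) (mul_pos (mul_pos (by norm_num : (0:ℝ) < (12636377/18253611008000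 : ℝ)) (pow_pos hx 29)) (pow_pos hy 3))) (mul_pos (mul_pos (by norm_num : (0:ℝ) < (327829/18253611008000 : ℝ)) (pow_pos hx 30)) (pow_pos hy 2))) (mul_pos (mul_pos (by norm_num : (0:ℝ) < (24431/18253611008000 : ℝ)) (pow_pos hx 31)) (pow_pos hy 1))) (mul_pos (mul_pos (by norm_num : (0:ℝ) < (17/42949672960 : ℝ)) (pow_pos hx 32)) (pow_pos hy 0)))

lemma sumB_pos {x y : ℝ} (hx : 0 < x) (hy : 0 < y) :
    0 < (17/42949672960 : ℝ) * x ^ 0 * y ^ 32 + (20861/18253611008000 : ℝ) * x ^ 1 * y ^ 31 + (379849/18253611008000 : ℝ) * x ^ 2 * y ^ 30 + (15338017/18253611008000 : ℝ) * x ^ 3 * y ^ 29 + (196424303/18253611008000 : ℝ) * x ^ 4 * y ^ 28 + (1429341417/18253611008000 : ℝ) * x ^ 5 * y ^ 27 + (7214891057/18253611008000 : ℝ) * x ^ 6 * y ^ 26 + (28005123333/18253611008000 : ℝ) * x ^ 7 * y ^ 25 + (5244367523/1073741824000 : ℝ) * x ^ 8 * y ^ 24 + (242037974809/18253611008000 :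 ℝ) * x ^ 9 * y ^ 23 + (569804904141/18253611008000 : ℝ) * x ^ 10 * y ^ 22 + (1162435438589/18253611008000 : ℝ) * x ^ 11 * y ^ 21 + (2033705479211/18253611008000 : ℝ) * x ^ 12 * y ^ 20 + (3009322723269/18253611008000 : ℝ) * x ^ 13 * y ^ 19 + (3710207660581/18253611008000 : ℝ) * x ^ 14 * y ^ 18 + (3745579368769/18253611008000 : ℝ) * x ^ 15 * y ^ 17 + (177875775993/1073741824000 : ℝ) * x ^ 16 * y ^ 16 + (110770590007/1073741824000 : ℝ) * x ^ 17 * y ^ 15 + (858239535131/18253611008000 : ℝ) * x ^ 18 * y ^ 14 + (287677018419/18253611008000 : ℝ) * x ^ 19 * y ^ 13 + (138761050381/18253611008000 : ℝ) * x ^ 20 * y ^ 12 + (168787296139/18253611008000 : ℝ) * x ^ 21 * y ^ 11 + (183611933811/18253611008000 : ℝ) * x ^ 22 * y ^ 10 + (139084642559/18253611008000 : ℝ) * x ^ 23 * y ^ 9 + (75967973441/18253611008000 : ℝ) * x ^ 24 * y ^ 8 + (1824588627/1073741824000 : ℝ) * x ^ 25 * y ^ 7 + (9795375247/18253611008000 :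 ℝ) * x ^ 26 * y ^ 6 + (2545559663/18253611008000 : ℝ) * x ^ 27 * y ^ 5 + (604402073/18253611008000 : ℝ) * x ^ 28 * y ^ 4 + (138083847/18253611008000 : ℝ) * x ^ 29 * y ^ 3 + (26783223/18253611008000 : ℝ) * x ^ 30 * y ^ 2 + (3486971/18253611008000 : ℝ) * x ^ 31 * y ^ 1 + (106997/9126805504000 : ℝ) * x ^ 32 * y ^ 0 :=
  (add_pos (add_pos (add_pos (add_pos (add_pos (add_pos (add_pos (add_pos (add_pos (add_pos (add_pos (add_pos (add_pos (add_pos (add_pos (add_pos (add_pos (add_pos (add_pos (add_pos (add_pos (add_pos (add_pos (add_pos (add_pos (add_pos (add_pos (add_pos (add_pos (add_pos (add_pos (add_pos (mul_pos (mul_pos (by norm_num : (0:ℝ) < (17/42949672960 : ℝ)) (pow_pos hx 0)) (pow_pos hy 32)) (mul_pos (mul_pos (by norm_num : (0:ℝ) < (20861/18253611008000 : ℝ)) (pow_pos hx 1)) (pow_pos hy 31))) (mul_pos (mul_pos (by norm_num : (0:ℝ) < (379849/18253611008000 : ℝ)) (pow_pos hx 2)) (pow_pos hy 30))) (mul_pos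 (mul_pos (by norm_num : (0:ℝ) < (15338017/18253611008000 : ℝ)) (pow_pos hx 3)) (pow_pos hy 29))) (mul_pos (mul_pos (by norm_num : (0:ℝ) < (196424303/18253611008000 : ℝ)) (pow_pos hx 4)) (pow_pos hy 28))) (mul_pos (mul_pos (by norm_num : (0:ℝ) < (1429341417/18253611008000 : ℝ)) (pow_pos hx 5)) (pow_pos hy 27))) (mul_pos (mul_pos (by norm_num : (0:ℝ) < (7214891057/18253611008000 : ℝ)) (pow_pos hx 6)) (pow_pos hy 26))) (mul_pos (mul_pos (by norm_num : (0:ℝ) < (28005123333/18253611008000 : ℝ)) (pow_pos hx 7)) (pow_pos hy 25))) (mul_pos (mul_pos (by norm_num : (0:ℝ) < (5244367523/1073741824000 : ℝ)) (pow_pos hx 8)) (pow_pos hy 24))) (mul_pos (mul_pos (by norm_num : (0:ℝ) < (242037974809/18253611008000 : ℝ)) (pow_pos hx 9)) (pow_pos hy 23))) (mul_pos (mul_pos (by norm_num : (0:ℝ) < (569804904141/18253611008000 : ℝ)) (pow_pos hx 10)) (pow_pos hy 22))) (mul_pos (mul_pos (by norm_num : (0:ℝ) < (1162435438589/18253611008000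 : ℝ)) (pow_pos hx 11)) (pow_pos hy 21))) (mul_pos (mul_pos (by norm_num : (0:ℝ) < (2033705479211/18253611008000 : ℝ)) (pow_pos hx 12)) (pow_pos hy 20))) (mul_pos (mul_pos (by norm_num : (0:ℝ) < (3009322723269/18253611008000 : ℝ)) (pow_pos hx 13)) (pow_pos hy 19))) (mul_pos (mul_pos (by norm_num : (0:ℝ) < (3710207660581/18253611008000 : ℝ)) (pow_pos hx 14)) (pow_pos hy 18))) (mul_pos (mul_pos (by norm_num : (0:ℝ) < (3745579368769/18253611008000 : ℝ)) (pow_pos hx 15)) (pow_pos hy 17))) (mul_pos (mul_pos (by norm_num : (0:ℝ) < (177875775993/1073741824000 : ℝ)) (pow_pos hx 16)) (pow_pos hy 16))) (mul_pos (mul_pos (by norm_num : (0:ℝ) < (110770590007/1073741824000 : ℝ)) (pow_pos hx 17)) (pow_pos hy 15))) (mul_pos (mul_pos (by norm_num : (0:ℝ) < (858239535131/18253611008000 : ℝ)) (pow_pos hx 18)) (pow_pos hy 14))) (mul_pos (mul_pos (by norm_num : (0:ℝ) < (287677018419/18253611008000 : ℝ)) (pow_pos hx 19)) (pow_pos hy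 13))) (mul_pos (mul_pos (by norm_num : (0:ℝ) < (138761050381/18253611008000 : ℝ)) (pow_pos hx 20)) (pow_pos hy 12))) (mul_pos (mul_pos (by norm_num : (0:ℝ) < (168787296139/18253611008000 : ℝ)) (pow_pos hx 21)) (pow_pos hy 11))) (mul_pos (mul_pos (by norm_num : (0:ℝ) < (183611933811/18253611008000 : ℝ)) (pow_pos hx 22)) (pow_pos hy 10))) (mul_pos (mul_pos (by norm_num : (0:ℝ) < (139084642559/18253611008000 : ℝ)) (pow_pos hx 23)) (pow_pos hy 9))) (mul_pos (mul_pos (by norm_num : (0:ℝ) < (75967973441/18253611008000 : ℝ)) (pow_pos hx 24)) (pow_pos hy 8))) (mul_pos (mul_pos (by norm_num : (0:ℝ) < (1824588627/1073741824000 : ℝ)) (pow_pos hx 25)) (pow_pos hy 7))) (mul_pos (mul_pos (by norm_num : (0:ℝ) < (9795375247/18253611008000 : ℝ)) (pow_pos hx 26)) (pow_pos hy 6))) (mul_pos (mul_pos (by norm_num : (0:ℝ) < (2545559663/18253611008000 : ℝ)) (pow_pos hx 27)) (pow_pos hy 5))) (mul_pos (mul_pos (by norm_num : (0:ℝ) <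 (604402073/18253611008000 : ℝ)) (pow_pos hx 28)) (pow_pos hy 4))) (mul_pos (mul_pos (by norm_num : (0:ℝ) < (138083847/18253611008000 : ℝ)) (pow_pos hx 29)) (pow_pos hy 3))) (mul_pos (mul_pos (by norm_num : (0:ℝ) < (26783223/18253611008000 : ℝ)) (pow_pos hx 30)) (pow_pos hy 2))) (mul_pos (mul_pos (by norm_num : (0:ℝ) < (3486971/18253611008000 : ℝ)) (pow_pos hx 31)) (pow_pos hy 1))) (mul_pos (mul_pos (by norm_num : (0:ℝ) < (106997/9126805504000 : ℝ)) (pow_pos hx 32)) (pow_pos hy 0)))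

lemma Pp_eq_bern (c : ℝ) : Pp c = (17/42949672960 : ℝ) * (1 - c) ^ 0 * (1 + c) ^ 32 + (45487/9126805504000 : ℝ) * (1 - c) ^ 1 * (1 + c) ^ 31 + (133813/4563402752000 : ℝ) * (1 - c) ^ 2 * (1 + c) ^ 30 + (1707629/9126805504000 : ℝ) * (1 - c) ^ 3 * (1 + c) ^ 29 + (8297273/4563402752000 : ℝ) * (1 - c) ^ 4 * (1 + c) ^ 28 + (137986749/9126805504000 : ℝ) * (1 - c) ^ 5 * (1 + c) ^ 27 + (207751401/2281701376000 : ℝ) * (1 - c) ^ 6 * (1 + c) ^ 26 + (3774376463/9126805504000 : ℝ) * (1 - c) ^ 7 * (1 + c) ^ 25 + (6808556881/4563402752000 : ℝ) * (1 - c) ^ 8 * (1 + c) ^ 24 + (40523836863/9126805504000 : ℝ) * (1 - c) ^ 9 * (1 + c) ^ 23 + (50953535231/4563402752000 : ℝ) * (1 - c) ^ 10 * (1 + c) ^ 22 + (219526182973/9126805504000 : ℝ) * (1 - c) ^ 11 * (1 + c) ^ 21 + (203831075571/4563402752000 : ℝ) * (1 - c) ^ 12 * (1 + c) ^ 20 +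 (653811376133/9126805504000 : ℝ) * (1 - c) ^ 13 * (1 + c) ^ 19 + (56575222187/570425344000 : ℝ) * (1 - c) ^ 14 * (1 + c) ^ 18 + (63550998999/536870912000 : ℝ) * (1 - c) ^ 15 * (1 + c) ^ 17 + (65279244851/536870912000 : ℝ) * (1 - c) ^ 16 * (1 + c) ^ 16 + (57629714549/536870912000 : ℝ) * (1 - c) ^ 17 * (1 + c) ^ 15 + (371383306371/4563402752000 : ℝ) * (1 - c) ^ 18 * (1 + c) ^ 14 + (483845142383/9126805504000 : ℝ) * (1 - c) ^ 19 * (1 + c) ^ 13 + (135756294271/4563402752000 : ℝ) * (1 - c) ^ 20 * (1 + c) ^ 12 + (131972661423/9126805504000 : ℝ) * (1 - c) ^ 21 * (1 + c) ^ 11 + (13999065253/2281701376000 : ℝ) * (1 - c) ^ 22 * (1 + c) ^ 10 + (20864454613/9126805504000 : ℝ) * (1 - c) ^ 23 * (1 + c) ^ 9 + (3398662881/4563402752000 : ℝ) * (1 - c) ^ 24 * (1 + c) ^ 8 + (1890510413/9126805504000 : ℝ) * (1 - c) ^ 25 * (1 + c) ^ 7 + (214342057/4563402752000 : ℝ) *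 (1 - c) ^ 26 * (1 + c) ^ 6 + (74861159/9126805504000 : ℝ) * (1 - c) ^ 27 * (1 + c) ^ 5 + (5004373/4563402752000 : ℝ) * (1 - c) ^ 28 * (1 + c) ^ 4 + (1361679/9126805504000 : ℝ) * (1 - c) ^ 29 * (1 + c) ^ 3 + (34027/1140850688000 : ℝ) * (1 - c) ^ 30 * (1 + c) ^ 2 + (46677/9126805504000 : ℝ) * (1 - c) ^ 31 * (1 + c) ^ 1 + (17/42949672960 : ℝ) * (1 - c) ^ 32 * (1 + c) ^ 0 := by
  unfold Pp; ring

lemma A_eq_bern (c : ℝ) : 17 / 10 - Qp c = (1 - c) * ((54391/4563402752000 : ℝ) * (1 - c) ^ 0 * (1 + c) ^ 32 + (3434951/18253611008000 : ℝ) * (1 - c) ^ 1 * (1 + c) ^ 31 + (24081583/18253611008000 : ℝ) * (1 - c) ^ 2 * (1 + c) ^ 30 + (99222697/18253611008000 : ℝ) * (1 - c) ^ 3 * (1 + c) ^ 29 + (285411183/18253611008000 : ℝ) * (1 - c) ^ 4 * (1 + c) ^ 28 + (787287743/18253611008000 : ℝ) * (1 - c) ^ 5 * (1 + c) ^ 27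 + (2860423467/18253611008000 : ℝ) * (1 - c) ^ 6 * (1 + c) ^ 26 + (656398777/1073741824000 : ℝ) * (1 - c) ^ 7 * (1 + c) ^ 25 + (36609322691/18253611008000 : ℝ) * (1 - c) ^ 8 * (1 + c) ^ 24 + (98948609859/18253611008000 : ℝ) * (1 - c) ^ 9 * (1 + c) ^ 23 + (235867363411/18253611008000 : ℝ) * (1 - c) ^ 10 * (1 + c) ^ 22 + (529849657789/18253611008000 : ℝ) * (1 - c) ^ 11 * (1 + c) ^ 21 + (1131804805731/18253611008000 : ℝ) * (1 - c) ^ 12 * (1 + c) ^ 20 + (2205688809419/18253611008000 : ℝ) * (1 - c) ^ 13 * (1 + c) ^ 19 + (3747889493231/18253611008000 : ℝ) * (1 - c) ^ 14 * (1 + c) ^ 18 + (318015545757/1073741824000 : ℝ) * (1 - c) ^ 15 * (1 + c) ^ 17 + (385120731743/1073741824000 : ℝ) * (1 - c) ^ 16 * (1 + c) ^ 16 + (6635229326869/18253611008000 : ℝ) * (1 - c) ^ 17 * (1 + c) ^ 15 + (5628219451581/18253611008000 : ℝ) * (1 - c) ^ 18 * (1 + c) ^ 14 + (4002366478619/18253611008000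 : ℝ) * (1 - c) ^ 19 * (1 + c) ^ 13 + (2394767840861/18253611008000 : ℝ) * (1 - c) ^ 20 * (1 + c) ^ 12 + (1214690868189/18253611008000 : ℝ) * (1 - c) ^ 21 * (1 + c) ^ 11 + (529668871441/18253611008000 : ℝ) * (1 - c) ^ 22 * (1 + c) ^ 10 + (202679324059/18253611008000 : ℝ) * (1 - c) ^ 23 * (1 + c) ^ 9 + (4076177673/1073741824000 : ℝ) * (1 - c) ^ 24 * (1 + c) ^ 8 + (21070171553/18253611008000 : ℝ) * (1 - c) ^ 25 * (1 + c) ^ 7 + (5456619137/18253611008000 : ℝ) * (1 - c) ^ 26 * (1 + c) ^ 6 + (1110350527/18253611008000 : ℝ) * (1 - c) ^ 27 * (1 + c) ^ 5 + (157563153/18253611008000 : ℝ) * (1 - c) ^ 28 * (1 + c) ^ 4 + (12636377/18253611008000 : ℝ) * (1 - c) ^ 29 * (1 + c) ^ 3 + (327829/18253611008000 : ℝ) * (1 - c) ^ 30 * (1 + c) ^ 2 + (24431/18253611008000 : ℝ) * (1 - c) ^ 31 * (1 + c) ^ 1 + (17/42949672960 : ℝ) * (1 - c) ^ 32 * (1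 + c) ^ 0) := by
  unfold Qp Pp dPp; ring

lemma B_eq_bern (c : ℝ) : 17 / 10 + Qp c = (1 + c) * ((17/42949672960 : ℝ) * (1 - c) ^ 0 * (1 + c) ^ 32 + (20861/18253611008000 : ℝ) * (1 - c) ^ 1 * (1 + c) ^ 31 + (379849/18253611008000 : ℝ) * (1 - c) ^ 2 * (1 + c) ^ 30 + (15338017/18253611008000 : ℝ) * (1 - c) ^ 3 * (1 + c) ^ 29 + (196424303/18253611008000 : ℝ) * (1 - c) ^ 4 * (1 + c) ^ 28 + (1429341417/18253611008000 : ℝ) * (1 - c) ^ 5 * (1 + c) ^ 27 + (7214891057/18253611008000 : ℝ) * (1 - c) ^ 6 * (1 + c) ^ 26 + (28005123333/18253611008000 : ℝ) * (1 - c) ^ 7 * (1 + c) ^ 25 + (5244367523/1073741824000 : ℝ) * (1 - c) ^ 8 * (1 + c) ^ 24 + (242037974809/18253611008000 : ℝ) * (1 - c) ^ 9 * (1 + c) ^ 23 + (569804904141/18253611008000 : ℝ) * (1 - c) ^ 10 * (1 + c) ^ 22 + (1162435438589/18253611008000 : ℝ) * (1 - c) ^ 11 * (1 + c) ^ 21 +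 (2033705479211/18253611008000 : ℝ) * (1 - c) ^ 12 * (1 + c) ^ 20 + (3009322723269/18253611008000 : ℝ) * (1 - c) ^ 13 * (1 + c) ^ 19 + (3710207660581/18253611008000 : ℝ) * (1 - c) ^ 14 * (1 + c) ^ 18 + (3745579368769/18253611008000 : ℝ) * (1 - c) ^ 15 * (1 + c) ^ 17 + (177875775993/1073741824000 : ℝ) * (1 - c) ^ 16 * (1 + c) ^ 16 + (110770590007/1073741824000 : ℝ) * (1 - c) ^ 17 * (1 + c) ^ 15 + (858239535131/18253611008000 : ℝ) * (1 - c) ^ 18 * (1 + c) ^ 14 + (287677018419/18253611008000 : ℝ) * (1 - c) ^ 19 * (1 + c) ^ 13 + (138761050381/18253611008000 : ℝ) * (1 - c) ^ 20 * (1 + c) ^ 12 + (168787296139/18253611008000 : ℝ) * (1 - c) ^ 21 * (1 + c) ^ 11 + (183611933811/18253611008000 : ℝ) * (1 - c) ^ 22 * (1 + c) ^ 10 + (139084642559/18253611008000 : ℝ) * (1 - c) ^ 23 * (1 + c) ^ 9 + (75967973441/18253611008000 : ℝ) * (1 - c) ^ 24 * (1 + c) ^ 8 + (1824588627/1073741824000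 : ℝ) * (1 - c) ^ 25 * (1 + c) ^ 7 + (9795375247/18253611008000 : ℝ) * (1 - c) ^ 26 * (1 + c) ^ 6 + (2545559663/18253611008000 : ℝ) * (1 - c) ^ 27 * (1 + c) ^ 5 + (604402073/18253611008000 : ℝ) * (1 - c) ^ 28 * (1 + c) ^ 4 + (138083847/18253611008000 : ℝ) * (1 - c) ^ 29 * (1 + c) ^ 3 + (26783223/18253611008000 : ℝ) * (1 - c) ^ 30 * (1 + c) ^ 2 + (3486971/18253611008000 : ℝ) * (1 - c) ^ 31 * (1 + c) ^ 1 + (106997/9126805504000 : ℝ) * (1 - c) ^ 32 * (1 + c) ^ 0) := by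
  unfold Qp Pp dPp; ring

lemma Pp_pos {c : ℝ} (h1 : -1 < c) (h2 : c < 1) : 0 < Pp c := by
  have hx : (0:ℝ) < 1 - c := by linarith
  have hy : (0:ℝ) < 1 + c := by linarith
  rw [Pp_eq_bern]
  exact sumP_pos hx hy

lemma Qp_lt {c : ℝ} (h1 : -1 < c) (h2 : c < 1) : Qp c < 17 / 10 := by
  have hx : (0:ℝ) < 1 - c := by linarith
  have hy : (0:ℝ) < 1 + c := by linarith
  have h := mul_pos hx (sumA_pos hx hy)
  have e := A_eq_bern c
  linarith [e ▸ h]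

lemma Qp_gt {c : ℝ} (h1 : -1 < c) (h2 : c < 1) : -(17 / 10) < Qp c := by
  have hx : (0:ℝ) < 1 - c := by linarith
  have hy : (0:ℝ) < 1 + c := by linarith
  have h := mul_pos hy (sumB_pos hx hy)
  have e := B_eq_bern c
  linarith [e ▸ h]

end StmtAux

noncomputable section StmtAux2
open Real

lemma hPder (c : ℝ) : HasDerivAt Pp (dPp c) c := by
  unfold Pp dPp
  have h := (((((((((hasDerivAt_const c (317/400 : ℝ)).add (HasDerivAt.const_mul (211/400 : ℝ) (hasDerivAt_id c))).add (HasDerivAt.const_mul (-(763/400) : ℝ) (hasDerivAt_pow 2 c))).add (HasDerivAt.const_mul (-(13/10) : ℝ) (hasDerivAt_pow 3 c))).add (HasDerivAt.const_mul (321/100 : ℝ) (hasDerivAt_pow 4 c))).add (HasDerivAt.const_mul (379/400 : ℝ) (hasDerivAt_pow 5 c))).add (HasDerivAt.const_mul (-(178367/34000) : ℝ) (hasDerivAt_pow 6 c))).add (HasDerivAt.const_mul (-(7/40) : ℝ) (hasDerivAt_pow 7 c))).add (HasDerivAt.const_mul (164937/34000 : ℝ) (hasDerivAt_pow 8 c)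))
  refine h.congr_deriv ?_
  push_cast
  ring

lemma hTder (c : ℝ) : HasDerivAt Tp (-Pp c) c := by
  unfold Tp Pp
  have h := ((((((((((hasDerivAt_const c (0 : ℝ)).add (HasDerivAt.const_mul (-(317/400) : ℝ) (hasDerivAt_id c))).add (HasDerivAt.const_mul (-(211/800) : ℝ) (hasDerivAt_pow 2 c))).add (HasDerivAt.const_mul (763/1200 : ℝ) (hasDerivAt_pow 3 c))).add (HasDerivAt.const_mul (13/40 : ℝ) (hasDerivAt_pow 4 c))).add (HasDerivAt.const_mul (-(321/500) : ℝ) (hasDerivAt_pow 5 c))).add (HasDerivAt.const_mul (-(379/2400) : ℝ) (hasDerivAt_pow 6 c))).add (HasDerivAt.const_mul (25481/34000 : ℝ) (hasDerivAt_pow 7 c))).add (HasDerivAt.const_mul (7/320 : ℝ) (hasDerivAt_pow 8 c))).add (HasDerivAt.const_mul (-(54979/102000) : ℝ) (hasDerivAt_pow 9 c)))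
  refine h.congr_deriv ?_
  push_cast
  ring

lemma hgam (t : ℝ) : HasDerivAt gam (10 / 17 * Qp (Real.cos (10 / 17 * t))) t := by
  have hu : HasDerivAt (fun s : ℝ => 10 / 17 * s) ((10 : ℝ) / 17) t := by
    simpa using HasDerivAt.const_mul ((10 : ℝ) / 17) (hasDerivAt_id t)
  have hs : HasDerivAt (fun s : ℝ => Real.sin (10 / 17 * s))
      (Real.cos (10 / 17 * t) * (10 / 17)) t := (Real.hasDerivAt_sin _).comp t hu
  have hc : HasDerivAt (fun s : ℝ => Real.cos (10 / 17 * s))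
      (-Real.sin (10 / 17 * t) * (10 / 17)) t := (Real.hasDerivAt_cos _).comp t hu
  have hp : HasDerivAt (fun s : ℝ => Pp (Real.cos (10 / 17 * s)))
      (dPp (Real.cos (10 / 17 * t)) * (-Real.sin (10 / 17 * t) * (10 / 17))) t :=
    (hPder _).comp t hc
  have h := hs.mul hp
  unfold gam
  refine h.congr_deriv ?_
  have hsq := Real.sin_sq (10 / 17 * t)
  unfold Qp
  linear_combination (-(10 / 17 * dPp (Real.cos (10 / 17 * t)))) * hsq

lemma hGg (t : ℝ) : HasDerivAt Gg (gam t) t := by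
  have hu : HasDerivAt (fun s : ℝ => 10 / 17 * s) ((10 : ℝ) / 17) t := by
    simpa using HasDerivAt.const_mul ((10 : ℝ) / 17) (hasDerivAt_id t)
  have hc : HasDerivAt (fun s : ℝ => Real.cos (10 / 17 * s))
      (-Real.sin (10 / 17 * t) * (10 / 17)) t := (Real.hasDerivAt_cos _).comp t hu
  have hT : HasDerivAt (fun s : ℝ => Tp (Real.cos (10 / 17 * s)))
      (-Pp (Real.cos (10 / 17 * t)) * (-Real.sin (10 / 17 * t) * (10 / 17))) t :=
    (hTder _).comp t hc
  have h := HasDerivAt.const_mul ((17 : ℝ) / 10) hT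
  unfold Gg gam
  refine h.congr_deriv ?_
  ring

lemma gam_smooth : ContDiff ℝ (⊤ : ℕ∞) gam := by
  have hlin : ContDiff ℝ (⊤ : ℕ∞) fun t : ℝ => 10 / 17 * t := contDiff_const.mul contDiff_id
  have hPs : ContDiff ℝ (⊤ : ℕ∞) Pp := by unfold Pp; fun_prop
  exact (Real.contDiff_sin.comp hlin).mul (hPs.comp (Real.contDiff_cos.comp hlin))

lemma gam_odd (x : ℝ) : gam (-x) = -gam x := by
  unfold gam
  rw [mul_neg, Real.sin_neg, Real.cos_neg]
  ring

lemma gam_sym (x : ℝ) : gam (2 * (17 * π / 10) + -x) = -gam x := by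
  unfold gam
  have e : 10 / 17 * (2 * (17 * π / 10) + -x) = 2 * π - 10 / 17 * x := by ring
  rw [e, Real.sin_sub, Real.cos_sub, Real.sin_two_pi, Real.cos_two_pi]
  ring_nf

lemma even_left (n : ℕ) : iteratedDeriv (2 * n) gam 0 = 0 := by
  have h := iteratedDeriv_comp_neg (2 * n) gam 0
  rw [show (fun x : ℝ => gam (-x)) = fun x => -gam x from funext gam_odd,
    iteratedDeriv_fun_neg, neg_zero, show ((-1 : ℝ)) ^ (2 * n) = 1 by rw [pow_mul]; norm_num,
    one_smul] at h
  linarith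

lemma even_right (n : ℕ) : iteratedDeriv (2 * n) gam (17 * π / 10) = 0 := by
  have h : iteratedDeriv (2 * n) (fun x : ℝ => gam (2 * (17 * π / 10) + -x)) (17 * π / 10)
      = (-1 : ℝ) ^ (2 * n) • iteratedDeriv (2 * n) (fun x : ℝ => gam (2 * (17 * π / 10) + x))
        (-(17 * π / 10)) :=
    iteratedDeriv_comp_neg (2 * n) (fun x : ℝ => gam (2 * (17 * π / 10) + x)) (17 * π / 10)
  rw [show (fun x : ℝ => gam (2 * (17 * π / 10) + -x)) = fun x => -gam x from funext gam_sym,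
    iteratedDeriv_fun_neg, iteratedDeriv_comp_const_add (2 * n) gam (2 * (17 * π / 10)),
    show ((-1 : ℝ)) ^ (2 * n) = 1 by rw [pow_mul]; norm_num, one_smul] at h
  simp only [] at h
  rw [show 2 * (17 * π / 10) + -(17 * π / 10) = 17 * π / 10 by ring] at h
  linarith

lemma gam_integral (a b : ℝ) : (∫ t in a..b, gam t) = Gg b - Gg a :=
  intervalIntegral.integral_eq_sub_of_hasDerivAt (fun x _ => hGg x)
    ((gam_smooth.continuous).intervalIntegrable a b)

end StmtAux2

open Real
/-- There exist a normalized profile function `γ` of some length `ℓ > 0`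
and a point `t₀ ∈ (0,ℓ)` with `γ' t₀ ≠ 0` such that
`γ t₀ ^ 2 − γ' t₀ · Γ t₀ < 0`; equivalently the action
`(γ t₀ ^ 2 − γ' t₀ · Γ t₀) / (γ' t₀)²` of the invariant measure supported on the
periodic orbit over the latitude `{t = t₀}` at energy parameter
`m = γ t₀ / |γ' t₀|` is negative. -/
theorem stmt_12 :
    ∃ ℓ : ℝ, ∃ γ : ℝ → ℝ, 0 < ℓ ∧ IsProfileFunction ℓ γ ∧ IsNormalizedProfile ℓ γ ∧
      ∃ t₀ ∈ Set.Ioo 0 ℓ, deriv γ t₀ ≠ 0 ∧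
        γ t₀ ^ 2 - deriv γ t₀ * Gam γ t₀ < 0 ∧
        (γ t₀ ^ 2 - deriv γ t₀ * Gam γ t₀) / (deriv γ t₀) ^ 2 < 0 := by
  have hπ := Real.pi_pos
  have hl : (0:ℝ) < 17 * π / 10 := by linarith
  have hepi : 10 / 17 * (17 * π / 10) = π := by ring
  refine ⟨17 * π / 10, gam, hl, ?_, ?_, ?_⟩
  · constructor
    · exact hl
    · exact gam_smooth
    · unfold gam; rw [mul_zero, Real.sin_zero, zero_mul]
    · unfold gam; rw [hepi, Real.sin_pi, zero_mul]
    · intro t ht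
      obtain ⟨h1, h2⟩ := ht
      have hu0 : 0 < 10 / 17 * t := by linarith
      have huπ : 10 / 17 * t < π := by linarith
      have hsin := Real.sin_pos_of_pos_of_lt_pi hu0 huπ
      have hclt : Real.cos (10 / 17 * t) < 1 := by
        have h := Real.cos_lt_cos_of_nonneg_of_le_pi (le_refl (0:ℝ)) (le_of_lt huπ) hu0
        rwa [Real.cos_zero] at h
      have hcgt : -1 < Real.cos (10 / 17 * t) := by
        have h := Real.cos_lt_cos_of_nonneg_of_le_pi (le_of_lt hu0) (le_refl π) huπ
        rwa [Real.cos_pi] at h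
      exact mul_pos hsin (Pp_pos hcgt hclt)
    · rw [(hgam 0).deriv, mul_zero, Real.cos_zero]
      unfold Qp Pp dPp; norm_num
    · rw [(hgam (17 * π / 10)).deriv, hepi, Real.cos_pi]
      unfold Qp Pp dPp; norm_num
    · intro t ht
      obtain ⟨h1, h2⟩ := ht
      have hu0 : 0 < 10 / 17 * t := by linarith
      have huπ : 10 / 17 * t < π := by linarith
      have hclt : Real.cos (10 / 17 * t) < 1 := by
        have h := Real.cos_lt_cos_of_nonneg_of_le_pi (le_refl (0:ℝ)) (le_of_lt huπ) hu0
        rwa [Real.cos_zero] at h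
      have hcgt : -1 < Real.cos (10 / 17 * t) := by
        have h := Real.cos_lt_cos_of_nonneg_of_le_pi (le_of_lt hu0) (le_refl π) huπ
        rwa [Real.cos_pi] at h
      rw [(hgam t).deriv, abs_lt]
      constructor
      · have := Qp_gt hcgt hclt; linarith
      · have := Qp_lt hcgt hclt; linarith
    · exact even_left
    · exact even_right
  · unfold IsNormalizedProfile
    rw [gam_integral 0 (17 * π / 10)]
    unfold Gg
    rw [mul_zero, Real.cos_zero, hepi, Real.cos_pi]
    unfold Tp; norm_num
  · refine ⟨17 / 10 * Real.arccos (-(9/10)), ⟨?_, ?_⟩, ?_⟩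
    · exact mul_pos (by norm_num) (Real.arccos_pos.2 (by norm_num))
    · have hlt : Real.arccos (-(9/10) : ℝ) < π := by
        refine lt_of_le_of_ne (Real.arccos_le_pi _) ?_
        intro hcontra
        have h1 := Real.cos_arccos (by norm_num : (-1:ℝ) ≤ -(9/10)) (by norm_num : (-(9/10):ℝ) ≤ 1)
        rw [hcontra, Real.cos_pi] at h1
        norm_num at h1
      linarith
    · have hu0 : 10 / 17 * (17 / 10 * Real.arccos (-(9/10))) = Real.arccos (-(9/10)) := by ring
      have hcos : Real.cos (10 / 17 * (17 / 10 * Real.arccos (-(9/10)))) = -(9/10) := by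
        rw [hu0]
        exact Real.cos_arccos (by norm_num) (by norm_num)
      have hder : deriv gam (17 / 10 * Real.arccos (-(9/10))) = 10 / 17 * Qp (-(9/10)) := by
        rw [(hgam _).deriv, hcos]
      have hQpos : 0 < Qp (-(9/10) : ℝ) := by
        unfold Qp Pp dPp; norm_num
      have hdpos : 0 < deriv gam (17 / 10 * Real.arccos (-(9/10))) := by
        rw [hder]; exact mul_pos (by norm_num) hQpos
      have hGam : Gam gam (17 / 10 * Real.arccos (-(9/10)))
          = -1 + (17 / 10 * Tp (-(9/10)) - 17 / 10 * Tp 1) := by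
        unfold Gam
        rw [gam_integral 0 (17 / 10 * Real.arccos (-(9/10)))]
        unfold Gg
        rw [hcos, mul_zero, Real.cos_zero]
      have hsq : gam (17 / 10 * Real.arccos (-(9/10))) ^ 2 = 19 / 100 * Pp (-(9/10)) ^ 2 := by
        unfold gam
        rw [hcos, mul_pow]
        have hs := Real.sin_sq (10 / 17 * (17 / 10 * Real.arccos (-(9/10))))
        rw [hcos] at hs
        rw [hs]
        norm_num
      have hnum : gam (17 / 10 * Real.arccos (-(9/10))) ^ 2
          - deriv gam (17 / 10 * Real.arccos (-(9/10)))
            * Gam gam (17 / 10 * Real.arccos (-(9/10))) < 0 := by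
        rw [hsq, hder, hGam]
        unfold Qp Pp dPp Tp
        norm_num
      exact ⟨ne_of_gt hdpos, hnum, div_neg_of_neg_of_pos hnum (pow_pos hdpos 2)⟩
end
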